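/- arXiv:1210.8412 — 3 statements merged into one kernel-verified Lean document; each statement's English description precedes it below -/
import Mathlib

section
/- Let H be a diagonal generator H = (h_1, h_2, h_3), i.e. H(σ_0) = 0 and H(σ_i) = h_i σ_i for i = 1,2,3 in the Pauli basis, with H self-adjoint and positive semidefinite and H(I_2) = 0. Then e^{-tH} is completely positive for all t ≥ 0 if and only if there exist constants a_1, a_2, a_3 ≥ 0 such that H = a_1 Γ_1 + a_2 Γ_2 + a_3 Γ_3, where Γ_1 = (0,1,1), Γ_2 = (1,0,1), Γ_3 = (1,1,0). -/
open scoped Matrix ComplexOrder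

/- Common definitions: matrix algebras, Schatten norms, superoperator norms,
   tensor products of superoperators, complete positivity, semigroup generators. -/

namespace QHC

/-- The algebra of complex matrices indexed by `a`. -/
abbrev Mat (a : Type*) [Fintype a] [DecidableEq a] := Matrix a a ℂ

variable {a b : Type*} [Fintype a] [DecidableEq a] [Fintype b] [DecidableEq b]

/-- The Schatten `p`-norm `‖M‖_p = (Tr |M|^p)^{1/p}`, computed via the
eigenvalues of the positive semidefinite matrix `Mᴴ * M` (whose eigenvalues are the
squares of the singular values of `M`). -/
noncomputable def schatten (p : ℝ) (M : Mat a) : ℝ :=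
  (∑ i, (Matrix.posSemidef_conjTranspose_mul_self M).isHermitian.eigenvalues i ^ (p / 2)) ^ (1 / p)

/-- The normalized Schatten `p`-norm `|||M|||_p = (k⁻¹ Tr |M|^p)^{1/p}`. -/
noncomputable def nschatten (p : ℝ) (M : Mat a) : ℝ :=
  ((Fintype.card a : ℝ)⁻¹ *
    ∑ i, (Matrix.posSemidef_conjTranspose_mul_self M).isHermitian.eigenvalues i ^ (p / 2)) ^ (1 / p)

/-- The `p → q` operator norm of a superoperator, for the Schatten norms. -/
noncomputable def opNorm (p q : ℝ) (L : Mat a →ₗ[ℂ] Mat a) : ℝ :=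
  ⨆ M : Mat a, schatten q (L M) / schatten p M

/-- The `p → q` operator norm of a superoperator, for the normalized Schatten norms. -/
noncomputable def nOpNorm (p q : ℝ) (L : Mat a →ₗ[ℂ] Mat a) : ℝ :=
  ⨆ M : Mat a, nschatten q (L M) / nschatten p M

/-- A superoperator is self-adjoint w.r.t. the inner product `⟨A, B⟩ = Tr(Aᴴ B)`. -/
def IsSelfAdjointMap (L : Mat a →ₗ[ℂ] Mat a) : Prop :=
  ∀ A B : Mat a, (Aᴴ * L B).trace = ((L A)ᴴ * B).trace

/-- A superoperator is positive semidefinite: self-adjoint and `⟨M, L M⟩ ≥ 0` for all `M`. -/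
def IsPosSemidefMap (L : Mat a →ₗ[ℂ] Mat a) : Prop :=
  IsSelfAdjointMap L ∧ ∀ M : Mat a, 0 ≤ (Mᴴ * L M).trace

/-- The tensor product `L₁ ⊗ L₂` of two superoperators, acting on matrices indexed by
`a × b`, characterized by `(L₁ ⊗ L₂)(E_{ik} ⊗ E_{jl}) = L₁(E_{ik}) ⊗ L₂(E_{jl})` on the
basis of matrix units and extended linearly. -/
noncomputable def tensorMap (L₁ : Mat a →ₗ[ℂ] Mat a) (L₂ : Mat b →ₗ[ℂ] Mat b) :
    Mat (a × b) →ₗ[ℂ] Mat (a × b) where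
  toFun M := Matrix.of fun s t => ∑ i : a, ∑ k : a, ∑ j : b, ∑ l : b,
      L₁ (Matrix.single i k 1) s.1 t.1 *
        L₂ (Matrix.single j l 1) s.2 t.2 * M (i, j) (k, l)
  map_add' M N := by
    ext s t
    simp [Matrix.add_apply, mul_add, Finset.sum_add_distrib]
  map_smul' c M := by
    ext s t
    simp only [Matrix.smul_apply, smul_eq_mul, Matrix.of_apply, RingHom.id_apply,
      Finset.mul_sum]
    exact Finset.sum_congr rfl fun i _ => Finset.sum_congr rfl fun k _ =>
      Finset.sum_congr rfl fun j _ => Finset.sum_congr rfl fun l _ => by ring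

/-- The `n`-fold tensor product `L 1 ⊗ L 2 ⊗ ⋯ ⊗ L n` of qubit superoperators, acting on
`2^n × 2^n` matrices indexed by the boolean cube `Fin n → Fin 2`; it is characterized by
its action `⊗_j (L j)(E_{u_j v_j})` on the tensor basis of matrix units, extended linearly. -/
noncomputable def tensorPow {n : ℕ} (L : Fin n → (Mat (Fin 2) →ₗ[ℂ] Mat (Fin 2))) :
    Mat (Fin n → Fin 2) →ₗ[ℂ] Mat (Fin n → Fin 2) where
  toFun M := Matrix.of fun s t => ∑ u : Fin n → Fin 2, ∑ v : Fin n → Fin 2,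
      (∏ j, (L j) (Matrix.single (u j) (v j) 1) (s j) (t j)) * M u v
  map_add' M N := by
    ext s t
    simp [Matrix.add_apply, mul_add, Finset.sum_add_distrib]
  map_smul' c M := by
    ext s t
    simp only [Matrix.smul_apply, smul_eq_mul, Matrix.of_apply, RingHom.id_apply,
      Finset.mul_sum]
    exact Finset.sum_congr rfl fun u _ => Finset.sum_congr rfl fun v _ => by ring

/-- A superoperator `L` is completely positive if `id_m ⊗ L` preserves positive
semidefiniteness for every `m`. -/
def IsCompletelyPositive (L : Mat a →ₗ[ℂ] Mat a) : Prop :=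
  ∀ m : ℕ, ∀ A : Mat (Fin m × a), A.PosSemidef → ((tensorMap LinearMap.id L) A).PosSemidef

/-- A superoperator is trace preserving if it preserves traces. -/
def IsTracePreserving (L : Mat a →ₗ[ℂ] Mat a) : Prop :=
  ∀ M : Mat a, (L M).trace = M.trace

/-- A unital qubit channel: completely positive, trace preserving, and unital. -/
def IsUnitalQubitChannel (Φ : Mat (Fin 2) →ₗ[ℂ] Mat (Fin 2)) : Prop :=
  IsCompletelyPositive Φ ∧ IsTracePreserving Φ ∧ Φ 1 = 1

/-- The exponential `e^L` of a superoperator, defined via the exponential of its matrix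
in the standard basis of the matrix algebra. -/
noncomputable def expMap (L : Mat a →ₗ[ℂ] Mat a) : Mat a →ₗ[ℂ] Mat a :=
  Matrix.toLin (Matrix.stdBasis ℂ a a) (Matrix.stdBasis ℂ a a)
    (NormedSpace.exp (LinearMap.toMatrix (Matrix.stdBasis ℂ a a) (Matrix.stdBasis ℂ a a) L))

/-- The set `G` of generators: `H(I₂) = 0`, `H` self-adjoint and positive semidefinite. -/
def memG (H : Mat (Fin 2) →ₗ[ℂ] Mat (Fin 2)) : Prop :=
  H 1 = 0 ∧ IsPosSemidefMap H

/-- The set `G^{CP}` of generators in `G` whose semigroup `e^{-tH}` is completely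
positive for all `t ≥ 0`. -/
def memGCP (H : Mat (Fin 2) →ₗ[ℂ] Mat (Fin 2)) : Prop :=
  memG H ∧ ∀ t : ℝ, 0 ≤ t → IsCompletelyPositive (expMap ((-(t : ℂ)) • H))

/-- `‖H‖_min`, the infimum of the Rayleigh quotient of `H` over traceless nonzero matrices. -/
noncomputable def normMin (H : Mat (Fin 2) →ₗ[ℂ] Mat (Fin 2)) : ℝ :=
  ⨅ M : {M : Mat (Fin 2) // M.trace = 0 ∧ M ≠ 0},
    ((M.1ᴴ * H M.1).trace).re / ((M.1ᴴ * M.1).trace).re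

/-- The set `G^{CP}_1` of unit-rate generators. -/
def memGCP1 (H : Mat (Fin 2) →ₗ[ℂ] Mat (Fin 2)) : Prop :=
  memGCP H ∧ normMin H = 1

/-- The Pauli matrices `σ₀ = I₂, σ₁, σ₂, σ₃`. -/
noncomputable def pauli : Fin 4 → Mat (Fin 2) :=
  ![1, !![0, 1; 1, 0], !![0, -Complex.I; Complex.I, 0], !![1, 0; 0, -1]]

/-- The qubit depolarizing channel `Δ_λ(M) = λ M + ((1-λ)/2) Tr(M) I₂`. -/
noncomputable def depol (l : ℝ) : Mat (Fin 2) →ₗ[ℂ] Mat (Fin 2) where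
  toFun M := (l : ℂ) • M + (((1 - l : ℝ) : ℂ) / 2 * M.trace) • 1
  map_add' M N := by
    simp only [Matrix.trace_add, mul_add, add_smul, smul_add]
    abel
  map_smul' c M := by
    simp only [Matrix.trace_smul, smul_eq_mul, smul_smul, smul_add, RingHom.id_apply]
    rw [mul_left_comm]
    ring_nf

/-- The uniform generator `H_u(M) = M - (1/2) Tr(M) I₂`. -/
noncomputable def uniformGen : Mat (Fin 2) →ₗ[ℂ] Mat (Fin 2) where
  toFun M := M - (M.trace / 2) • 1
  map_add' M N := by
    simp only [Matrix.trace_add, add_div, add_smul]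
    abel
  map_smul' c M := by
    simp only [Matrix.trace_smul, smul_eq_mul, RingHom.id_apply, smul_sub, smul_smul,
      mul_div_assoc]

/-- The matrix `f(A)` obtained by applying `f : ℝ → ℝ` to a Hermitian matrix `A` via the
spectral decomposition (functional calculus). -/
noncomputable def herFun (A : Mat a) (hA : A.IsHermitian) (f : ℝ → ℝ) : Mat a :=
  (hA.eigenvectorUnitary : Mat a) *
    Matrix.diagonal (fun i => (f (hA.eigenvalues i) : ℂ)) *
    (hA.eigenvectorUnitary : Mat a)ᴴ

/-- The real power `A^r` of a positive semidefinite matrix, via functional calculus. -/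
noncomputable def posPow (A : Mat a) (hA : A.IsHermitian) (r : ℝ) : Mat a :=
  herFun A hA (fun x => x ^ r)

/-- The diagonal qubit generator `H = (h₁, h₂, h₃)` in the Pauli basis:
`H(σ₀) = 0` and `H(σᵢ) = hᵢ σᵢ` for `i = 1,2,3`. -/
noncomputable def diagGen (h₁ h₂ h₃ : ℝ) : Mat (Fin 2) →ₗ[ℂ] Mat (Fin 2) where
  toFun M := ((h₁ : ℂ) * ((pauli 1 * M).trace / 2)) • pauli 1
    + ((h₂ : ℂ) * ((pauli 2 * M).trace / 2)) • pauli 2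
    + ((h₃ : ℂ) * ((pauli 3 * M).trace / 2)) • pauli 3
  map_add' M N := by
    simp only [Matrix.mul_add, Matrix.trace_add, add_div, mul_add, add_smul]
    abel
  map_smul' c M := by
    simp only [Matrix.mul_smul, Matrix.trace_smul, smul_eq_mul, RingHom.id_apply, smul_add,
      smul_smul]
    ring_nf

end QHC

namespace QHC

open Matrix NormedSpace
open scoped ComplexOrder

lemma exp_mulVec {n : Type*} [Fintype n] [DecidableEq n] (B : Matrix n n ℂ) (x : n → ℂ) (c : ℂ)
    (h : B.mulVec x = c • x) : (exp B).mulVec x = Complex.exp c • x := by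
  letI : SeminormedRing (Matrix n n ℂ) := Matrix.linftyOpSemiNormedRing
  letI : NormedRing (Matrix n n ℂ) := Matrix.linftyOpNormedRing
  letI : NormedAlgebra ℂ (Matrix n n ℂ) := Matrix.linftyOpNormedAlgebra
  have hpow : ∀ k : ℕ, (B ^ k).mulVec x = c ^ k • x := by
    intro k
    induction k with
    | zero => simp
    | succ k ih =>
        rw [pow_succ, ← Matrix.mulVec_mulVec, h, Matrix.mulVec_smul, ih, smul_smul, pow_succ,
          mul_comm]
  let L : Matrix n n ℂ →L[ℂ] (n → ℂ) :=
    LinearMap.toContinuousLinearMap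
    { toFun := fun M => M.mulVec x
      map_add' := fun M N => Matrix.add_mulVec M N x
      map_smul' := fun c M => Matrix.smul_mulVec c M x }
  have hsum : Summable fun k : ℕ => (k.factorial : ℂ)⁻¹ • B ^ k :=
    expSeries_summable' (𝕂 := ℂ) B
  have hkey : (exp B).mulVec x = L (exp B) := rfl
  have hsum2 : Summable fun k : ℕ => (k.factorial : ℂ)⁻¹ * c ^ k := by
    simpa [smul_eq_mul] using expSeries_summable' (𝕂 := ℂ) c
  rw [hkey, exp_eq_tsum (𝕂 := ℂ), L.map_tsum hsum]
  have : ∀ k : ℕ, L ((k.factorial : ℂ)⁻¹ • B ^ k) = ((k.factorial : ℂ)⁻¹ * c ^ k) • x := by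
    intro k
    rw [_root_.map_smul]
    show (k.factorial : ℂ)⁻¹ • (B ^ k).mulVec x = _
    rw [hpow, smul_smul]
  rw [tsum_congr this, hsum2.tsum_smul_const, Complex.exp_eq_exp_ℂ, exp_eq_tsum (𝕂 := ℂ)]
  simp [smul_eq_mul]

lemma expMap_eigen {a : Type*} [Fintype a] [DecidableEq a]
    (L : Mat a →ₗ[ℂ] Mat a) (v : Mat a) (c : ℂ) (h : L v = c • v) :
    expMap L v = Complex.exp c • v := by
  set b := Matrix.stdBasis ℂ a a
  set B := LinearMap.toMatrix b b L with hB
  set E := Matrix.toLin b b (exp B) with hE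
  have h1 : B.mulVec ⇑(b.repr v) = c • ⇑(b.repr v) := by
    rw [hB, LinearMap.toMatrix_mulVec_repr, h, _root_.map_smul]
    rfl
  have h2 := exp_mulVec B (⇑(b.repr v)) c h1
  have h3 : (LinearMap.toMatrix b b E).mulVec ⇑(b.repr v) = ⇑(b.repr (E v)) :=
    LinearMap.toMatrix_mulVec_repr b b E v
  rw [hE, LinearMap.toMatrix_toLin] at h3
  apply b.repr.injective
  apply DFunLike.coe_injective
  show ⇑(b.repr (E v)) = ⇑(b.repr (Complex.exp c • v))
  rw [hE, ← h3, h2, _root_.map_smul]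
  rfl

lemma pauli_decomp (M : Mat (Fin 2)) :
    M = (M.trace/2) • pauli 0 + ((pauli 1 * M).trace/2) • pauli 1
      + ((pauli 2 * M).trace/2) • pauli 2 + ((pauli 3 * M).trace/2) • pauli 3 := by
  ext i j
  fin_cases i <;> fin_cases j <;>
    simp [pauli, Matrix.trace_fin_two, Matrix.mul_apply, Fin.sum_univ_two, Matrix.one_apply,
      Matrix.vecMul, dotProduct] <;>
    ring_nf <;> simp [Complex.I_sq] <;> ring

lemma pauli_zero : pauli 0 = 1 := rfl

/-- The channel formula for `e^{-tH}` of a diagonal generator. -/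
lemma expMap_diag_apply (h₁ h₂ h₃ t : ℝ) (H : Mat (Fin 2) →ₗ[ℂ] Mat (Fin 2))
    (hH0 : H 1 = 0)
    (hH1 : H (pauli 1) = (h₁ : ℂ) • pauli 1)
    (hH2 : H (pauli 2) = (h₂ : ℂ) • pauli 2)
    (hH3 : H (pauli 3) = (h₃ : ℂ) • pauli 3) (M : Mat (Fin 2)) :
    expMap ((-(t : ℂ)) • H) M
      = (M.trace/2) • pauli 0
        + (((Real.exp (-(t*h₁)) : ℝ) : ℂ) * ((pauli 1 * M).trace/2)) • pauli 1
        + (((Real.exp (-(t*h₂)) : ℝ) : ℂ) * ((pauli 2 * M).trace/2)) • pauli 2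
        + (((Real.exp (-(t*h₃)) : ℝ) : ℂ) * ((pauli 3 * M).trace/2)) • pauli 3 := by
  have e0 : expMap ((-(t : ℂ)) • H) (pauli 0) = pauli 0 := by
    have h : ((-(t : ℂ)) • H) (pauli 0) = (0 : ℂ) • pauli 0 := by
      rw [LinearMap.smul_apply, pauli_zero, hH0, smul_zero, zero_smul]
    simpa using expMap_eigen _ _ _ h
  have key : ∀ i : Fin 4, ∀ h : ℝ, H (pauli i) = (h : ℂ) • pauli i →
      expMap ((-(t : ℂ)) • H) (pauli i) = ((Real.exp (-(t*h)) : ℝ) : ℂ) • pauli i := by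
    intro i h hi
    have hc : ((-(t : ℂ)) • H) (pauli i) = ((-(t*h) : ℝ) : ℂ) • pauli i := by
      rw [LinearMap.smul_apply, hi, smul_smul]
      push_cast
      ring_nf
    rw [expMap_eigen _ _ _ hc, ← Complex.ofReal_exp]
  have e1 := key 1 h₁ hH1
  have e2 := key 2 h₂ hH2
  have e3 := key 3 h₃ hH3
  conv_lhs => rw [pauli_decomp M]
  rw [map_add, map_add, map_add, _root_.map_smul, _root_.map_smul, _root_.map_smul, _root_.map_smul, e0, e1, e2, e3,
    smul_smul, smul_smul, smul_smul]
  ring_nf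


/-- Channel form with Pauli eigenvalues `1, l1, l2, l3`. -/
def chanForm (K : Mat (Fin 2) →ₗ[ℂ] Mat (Fin 2)) (l1 l2 l3 : ℝ) : Prop :=
  ∀ M : Mat (Fin 2), K M = (M.trace/2) • pauli 0
    + ((l1 : ℂ) * ((pauli 1 * M).trace/2)) • pauli 1
    + ((l2 : ℂ) * ((pauli 2 * M).trace/2)) • pauli 2
    + ((l3 : ℂ) * ((pauli 3 * M).trace/2)) • pauli 3

variable {K : Mat (Fin 2) →ₗ[ℂ] Mat (Fin 2)} {l1 l2 l3 : ℝ}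

lemma K_E00 (hK : chanForm K l1 l2 l3) :
    K (Matrix.single 0 0 1) = !![(1+(l3:ℂ))/2, 0; 0, (1-(l3:ℂ))/2] := by
  rw [hK]
  ext i j
  fin_cases i <;> fin_cases j <;>
    simp [pauli, Matrix.single, Matrix.trace_fin_two, Matrix.mul_apply,
      Fin.sum_univ_two, Matrix.one_apply, Matrix.vecHead, Matrix.vecTail, Matrix.of_apply] <;> ring_nf <;> simp [Complex.I_sq] <;> ring

lemma K_E01 (hK : chanForm K l1 l2 l3) :
    K (Matrix.single 0 1 1) = !![0, ((l1:ℂ)+(l2:ℂ))/2; ((l1:ℂ)-(l2:ℂ))/2, 0] := by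
  rw [hK]
  ext i j
  fin_cases i <;> fin_cases j <;>
    simp [pauli, Matrix.single, Matrix.trace_fin_two, Matrix.mul_apply,
      Fin.sum_univ_two, Matrix.one_apply, Matrix.vecHead, Matrix.vecTail, Matrix.of_apply] <;> ring_nf <;> simp [Complex.I_sq] <;> ring

lemma K_E10 (hK : chanForm K l1 l2 l3) :
    K (Matrix.single 1 0 1) = !![0, ((l1:ℂ)-(l2:ℂ))/2; ((l1:ℂ)+(l2:ℂ))/2, 0] := by
  rw [hK]
  ext i j
  fin_cases i <;> fin_cases j <;>
    simp [pauli, Matrix.single, Matrix.trace_fin_two, Matrix.mul_apply,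
      Fin.sum_univ_two, Matrix.one_apply, Matrix.vecHead, Matrix.vecTail, Matrix.of_apply] <;> ring_nf <;> simp [Complex.I_sq] <;> ring

lemma K_E11 (hK : chanForm K l1 l2 l3) :
    K (Matrix.single 1 1 1) = !![(1-(l3:ℂ))/2, 0; 0, (1+(l3:ℂ))/2] := by
  rw [hK]
  ext i j
  fin_cases i <;> fin_cases j <;>
    simp [pauli, Matrix.single, Matrix.trace_fin_two, Matrix.mul_apply,
      Fin.sum_univ_two, Matrix.one_apply, Matrix.vecHead, Matrix.vecTail, Matrix.of_apply] <;> ring_nf <;> simp [Complex.I_sq] <;> ring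

/-- the action of `id ⊗ K` entrywise. -/
lemma tensorMap_id_apply {m : Type*} [Fintype m] [DecidableEq m]
    (L : Mat (Fin 2) →ₗ[ℂ] Mat (Fin 2)) (A : Mat (m × Fin 2)) (s t : m × Fin 2) :
    tensorMap LinearMap.id L A s t
      = ∑ j : Fin 2, ∑ l : Fin 2,
          L (Matrix.single j l 1) s.2 t.2 * A (s.1, j) (t.1, l) := by
  show ∑ i : m, ∑ k : m, ∑ j : Fin 2, ∑ l : Fin 2,
      (LinearMap.id (Matrix.single i k (1:ℂ))) s.1 t.1 *
        L (Matrix.single j l 1) s.2 t.2 * A (i, j) (k, l) = _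
  simp only [LinearMap.id_coe, id_eq]
  have : ∀ i k : m, ∀ j l : Fin 2,
      Matrix.single i k (1:ℂ) s.1 t.1 * L (Matrix.single j l 1) s.2 t.2 *
        A (i, j) (k, l)
      = if i = s.1 then (if k = t.1 then
          L (Matrix.single j l 1) s.2 t.2 * A (i, j) (k, l) else 0) else 0 := by
    intro i k j l
    by_cases h1 : i = s.1 <;> by_cases h2 : k = t.1 <;>
      simp [h1, h2, Matrix.single, Matrix.of_apply]
  simp only [this, Finset.sum_ite_irrel, Finset.sum_const_zero, Finset.sum_ite_eq',
    Finset.mem_univ, if_true]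


/-- The (unnormalized) maximally entangled state. -/
def omega : Mat (Fin 2 × Fin 2) :=
  Matrix.of fun p q => if p.1 = p.2 ∧ q.1 = q.2 then 1 else 0

lemma omega_posSemidef : omega.PosSemidef := by
  rw [Matrix.posSemidef_iff_dotProduct_mulVec]
  constructor
  · ext p q
    simp only [omega, Matrix.conjTranspose_apply, Matrix.of_apply, apply_ite (star : ℂ → ℂ),
      star_one, star_zero]
    congr 1
    exact propext and_comm
  · intro x
    have h0 : (0:ℂ) ≤ star (x (0,0) + x (1,1)) * (x (0,0) + x (1,1)) := star_mul_self_nonneg _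
    have he : dotProduct (star x) (omega.mulVec x)
        = star (x (0,0) + x (1,1)) * (x (0,0) + x (1,1)) := by
      simp [omega, dotProduct, Matrix.mulVec, Fintype.sum_prod_type, Fin.sum_univ_two,
        star_add]
      ring
    rw [he]
    exact h0

lemma chan_ineqs (hK : chanForm K l1 l2 l3)
    (hCP : ∀ (A : Mat (Fin 2 × Fin 2)), A.PosSemidef → (tensorMap LinearMap.id K A).PosSemidef) :
    0 ≤ 1 + l3 - l1 - l2 ∧ 0 ≤ 1 - l3 + l1 - l2 ∧ 0 ≤ 1 - l3 - l1 + l2 := by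
  have hC := hCP omega omega_posSemidef
  set C := tensorMap LinearMap.id K omega with hCdef
  have hent : ∀ s t : Fin 2 × Fin 2, C s t = K (Matrix.single s.1 t.1 1) s.2 t.2 := by
    intro s t
    obtain ⟨s1, s2⟩ := s
    obtain ⟨t1, t2⟩ := t
    rw [hCdef, tensorMap_id_apply]
    fin_cases s1 <;> fin_cases t1 <;> simp [omega, Fin.sum_univ_two]
  refine ⟨?_, ?_, ?_⟩
  · have q := hC.dotProduct_mulVec_nonneg (fun p => if p = (0,0) then 1 else if p = (1,1) then (-1:ℂ) else 0)
    have e : dotProduct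
        (star (fun p => if p = (0,0) then 1 else if p = (1,1) then (-1:ℂ) else 0))
        (C.mulVec (fun p => if p = (0,0) then 1 else if p = (1,1) then (-1:ℂ) else 0))
        = ((1 + l3 - l1 - l2 : ℝ) : ℂ) := by
      simp [dotProduct, Matrix.mulVec, Fintype.sum_prod_type, Fin.sum_univ_two,
        hent, K_E00 hK, K_E01 hK, K_E10 hK, K_E11 hK, Prod.ext_iff]
      push_cast
      ring
    rw [e] at q
    exact_mod_cast q
  · have q := hC.dotProduct_mulVec_nonneg (fun p => if p = (0,1) then 1 else if p = (1,0) then (1:ℂ) else 0)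
    have e : dotProduct
        (star (fun p => if p = (0,1) then 1 else if p = (1,0) then (1:ℂ) else 0))
        (C.mulVec (fun p => if p = (0,1) then 1 else if p = (1,0) then (1:ℂ) else 0))
        = ((1 - l3 + l1 - l2 : ℝ) : ℂ) := by
      simp [dotProduct, Matrix.mulVec, Fintype.sum_prod_type, Fin.sum_univ_two,
        hent, K_E00 hK, K_E01 hK, K_E10 hK, K_E11 hK, Prod.ext_iff]
      push_cast
      ring
    rw [e] at q
    exact_mod_cast q
  · have q := hC.dotProduct_mulVec_nonneg (fun p => if p = (0,1) then 1 else if p = (1,0) then (-1:ℂ) else 0)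
    have e : dotProduct
        (star (fun p => if p = (0,1) then 1 else if p = (1,0) then (-1:ℂ) else 0))
        (C.mulVec (fun p => if p = (0,1) then 1 else if p = (1,0) then (-1:ℂ) else 0))
        = ((1 - l3 - l1 + l2 : ℝ) : ℂ) := by
      simp [dotProduct, Matrix.mulVec, Fintype.sum_prod_type, Fin.sum_univ_two,
        hent, K_E00 hK, K_E01 hK, K_E10 hK, K_E11 hK, Prod.ext_iff]
      push_cast
      ring
    rw [e] at q
    exact_mod_cast q

/-- If `1 + e^{-ta} - e^{-tb} - e^{-tc} ≥ 0` for all `t ≥ 0` then `b + c - a ≥ 0`. -/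
lemma slope_ineq {a b c : ℝ}
    (h : ∀ t : ℝ, 0 ≤ t → 0 ≤ 1 + Real.exp (-(t*a)) - Real.exp (-(t*b)) - Real.exp (-(t*c))) :
    0 ≤ b + c - a := by
  set f : ℝ → ℝ := fun t => 1 + Real.exp (-(t*a)) - Real.exp (-(t*b)) - Real.exp (-(t*c))
    with hf
  have hexp : ∀ d : ℝ, HasDerivAt (fun t : ℝ => Real.exp (-(t*d))) (-d) 0 := by
    intro d
    have h1 : HasDerivAt (fun t : ℝ => -(t*d)) (-d) 0 := by
      have := ((hasDerivAt_id' (0:ℝ)).mul_const d).neg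
      rw [one_mul] at this
      exact this
    have := (Real.hasDerivAt_exp (-(0*d))).comp 0 h1
    simp only [zero_mul, neg_zero, Real.exp_zero, one_mul] at this
    exact this
  have hder : HasDerivAt f (b + c - a) 0 := by
    have := (((hexp a).const_add 1).sub (hexp b)).sub (hexp c)
    have key : (b + c - a) = -a - -b - -c := by ring
    rw [key]
    exact this
  have htend := hasDerivAt_iff_tendsto_slope.mp hder
  have htend' : Filter.Tendsto (slope f 0) (nhdsWithin 0 (Set.Ioi 0)) (nhds (b + c - a)) :=
    htend.mono_left (nhdsWithin_mono 0 (fun x hx => ne_of_gt hx))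
  refine ge_of_tendsto htend' ?_
  filter_upwards [self_mem_nhdsWithin] with t ht
  have ht' : (0:ℝ) < t := ht
  have hf0 : f 0 = 0 := by simp [hf]
  rw [slope_def_field]
  simp only [hf0, sub_zero]
  exact div_nonneg (h t ht'.le) ht'.le


lemma diagGen_apply (c1 c2 c3 : ℝ) (M : Mat (Fin 2)) :
    diagGen c1 c2 c3 M = ((c1:ℂ) * ((pauli 1 * M).trace/2)) • pauli 1
      + ((c2:ℂ) * ((pauli 2 * M).trace/2)) • pauli 2
      + ((c3:ℂ) * ((pauli 3 * M).trace/2)) • pauli 3 := rfl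

lemma H_eq_combination (h₁ h₂ h₃ a₁ a₂ a₃ : ℝ) (H : Mat (Fin 2) →ₗ[ℂ] Mat (Fin 2))
    (hH0 : H 1 = 0)
    (hH1 : H (pauli 1) = (h₁ : ℂ) • pauli 1)
    (hH2 : H (pauli 2) = (h₂ : ℂ) • pauli 2)
    (hH3 : H (pauli 3) = (h₃ : ℂ) • pauli 3)
    (e1 : h₁ = a₂ + a₃) (e2 : h₂ = a₁ + a₃) (e3 : h₃ = a₁ + a₂) :
    H = (a₁ : ℂ) • diagGen 0 1 1 + (a₂ : ℂ) • diagGen 1 0 1 + (a₃ : ℂ) • diagGen 1 1 0 := by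
  apply LinearMap.ext
  intro M
  have lhs : H M = ((pauli 1 * M).trace/2) • ((h₁:ℂ) • pauli 1)
      + ((pauli 2 * M).trace/2) • ((h₂:ℂ) • pauli 2)
      + ((pauli 3 * M).trace/2) • ((h₃:ℂ) • pauli 3) := by
    conv_lhs => rw [pauli_decomp M]
    rw [map_add, map_add, map_add, _root_.map_smul, _root_.map_smul, _root_.map_smul,
      _root_.map_smul, pauli_zero, hH0, hH1, hH2, hH3, smul_zero, zero_add]
  rw [lhs]
  show _ = ((a₁:ℂ) • diagGen 0 1 1) M + ((a₂:ℂ) • diagGen 1 0 1) M + ((a₃:ℂ) • diagGen 1 1 0) M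
  simp only [LinearMap.smul_apply, diagGen_apply]
  subst e1 e2 e3
  match_scalars <;> push_cast <;> ring

/-- Forward direction. -/
lemma forward_dir (h₁ h₂ h₃ : ℝ) (H : Mat (Fin 2) →ₗ[ℂ] Mat (Fin 2)) (hH0 : H 1 = 0)
    (hH1 : H (pauli 1) = (h₁ : ℂ) • pauli 1)
    (hH2 : H (pauli 2) = (h₂ : ℂ) • pauli 2)
    (hH3 : H (pauli 3) = (h₃ : ℂ) • pauli 3)
    (hCP : ∀ t : ℝ, 0 ≤ t → IsCompletelyPositive (expMap ((-(t : ℂ)) • H))) :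
    ∃ a₁ a₂ a₃ : ℝ, 0 ≤ a₁ ∧ 0 ≤ a₂ ∧ 0 ≤ a₃ ∧
      H = (a₁ : ℂ) • diagGen 0 1 1 + (a₂ : ℂ) • diagGen 1 0 1 +
        (a₃ : ℂ) • diagGen 1 1 0 := by
  have hK : ∀ t : ℝ, chanForm (expMap ((-(t : ℂ)) • H))
      (Real.exp (-(t*h₁))) (Real.exp (-(t*h₂))) (Real.exp (-(t*h₃))) := by
    intro t M
    exact expMap_diag_apply h₁ h₂ h₃ t H hH0 hH1 hH2 hH3 M
  have hineq : ∀ t : ℝ, 0 ≤ t →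
      0 ≤ 1 + Real.exp (-(t*h₃)) - Real.exp (-(t*h₁)) - Real.exp (-(t*h₂)) ∧
      0 ≤ 1 - Real.exp (-(t*h₃)) + Real.exp (-(t*h₁)) - Real.exp (-(t*h₂)) ∧
      0 ≤ 1 - Real.exp (-(t*h₃)) - Real.exp (-(t*h₁)) + Real.exp (-(t*h₂)) := by
    intro t ht
    exact chan_ineqs (hK t) (fun A hA => hCP t ht 2 A hA)
  have t1 : 0 ≤ h₁ + h₂ - h₃ := slope_ineq (fun t ht => (hineq t ht).1)
  have t2 : 0 ≤ h₂ + h₃ - h₁ := by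
    apply slope_ineq (a := h₁) (b := h₂) (c := h₃)
    intro t ht
    have := (hineq t ht).2.1
    linarith
  have t3 : 0 ≤ h₁ + h₃ - h₂ := by
    apply slope_ineq (a := h₂) (b := h₁) (c := h₃)
    intro t ht
    have := (hineq t ht).2.2
    linarith
  refine ⟨(h₂ + h₃ - h₁)/2, (h₁ + h₃ - h₂)/2, (h₁ + h₂ - h₃)/2, by linarith, by linarith,
    by linarith, ?_⟩
  exact H_eq_combination h₁ h₂ h₃ _ _ _ H hH0 hH1 hH2 hH3 (by ring) (by ring) (by ring)


lemma posSemidef_real_smul {n : Type*} [Fintype n] {B : Matrix n n ℂ} (hB : B.PosSemidef)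
    {c : ℝ} (hc : 0 ≤ c) : ((c : ℂ) • B).PosSemidef := by
  rw [Matrix.posSemidef_iff_dotProduct_mulVec]
  constructor
  · show ((c:ℂ) • B)ᴴ = (c:ℂ) • B
    rw [Matrix.conjTranspose_smul, hB.1.eq]
    congr 1
    exact Complex.conj_ofReal c
  · intro x
    have h := hB.dotProduct_mulVec_nonneg x
    rw [Matrix.smul_mulVec, dotProduct_smul]
    exact smul_nonneg (by exact_mod_cast hc) h

lemma trace_pauli_mul (i j : Fin 4) : (pauli i * pauli j).trace = if i = j then 2 else 0 := by
  fin_cases i <;> fin_cases j <;>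
    simp [pauli, Matrix.trace_fin_two, Matrix.mul_apply, Fin.sum_univ_two, Matrix.one_apply,
      Matrix.vecHead, Matrix.vecTail, Matrix.of_apply] <;>
    ring_nf <;> simp [Complex.I_sq] <;> ring

lemma diagGen_pauli1 (c1 c2 c3 : ℝ) : diagGen c1 c2 c3 (pauli 1) = (c1 : ℂ) • pauli 1 := by
  rw [diagGen_apply]
  have e11 := trace_pauli_mul 1 1
  have e21 := trace_pauli_mul 2 1
  have e31 := trace_pauli_mul 3 1
  rw [e11, e21, e31]
  simp

lemma diagGen_pauli2 (c1 c2 c3 : ℝ) : diagGen c1 c2 c3 (pauli 2) = (c2 : ℂ) • pauli 2 := by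
  rw [diagGen_apply]
  have e12 := trace_pauli_mul 1 2
  have e22 := trace_pauli_mul 2 2
  have e32 := trace_pauli_mul 3 2
  rw [e12, e22, e32]
  simp

lemma diagGen_pauli3 (c1 c2 c3 : ℝ) : diagGen c1 c2 c3 (pauli 3) = (c3 : ℂ) • pauli 3 := by
  rw [diagGen_apply]
  have e13 := trace_pauli_mul 1 3
  have e23 := trace_pauli_mul 2 3
  have e33 := trace_pauli_mul 3 3
  rw [e13, e23, e33]
  simp

lemma smul_pauli_inj (i : Fin 4) (hi : i ≠ 0) {x y : ℂ} (h : x • pauli i = y • pauli i) :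
    x = y := by
  fin_cases i
  · exact absurd rfl hi
  · have := congrArg (fun M : Mat (Fin 2) => M 0 1) h
    simpa [pauli] using this
  · have := congrArg (fun M : Mat (Fin 2) => M 1 0) h
    have h2 : x * Complex.I = y * Complex.I := by simpa [pauli] using this
    exact mul_right_cancel₀ Complex.I_ne_zero h2
  · have := congrArg (fun M : Mat (Fin 2) => M 0 0) h
    simpa [pauli] using this

/-- entries of `(1 ⊗ P) A (1 ⊗ P)ᴴ`. -/
lemma conj_entry {m : Type*} [Fintype m] [DecidableEq m] (P : Mat (Fin 2))
    (A : Mat (m × Fin 2)) (s t : m × Fin 2) :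
    (Matrix.kroneckerMap (· * ·) (1 : Mat m) P * A *
        (Matrix.kroneckerMap (· * ·) (1 : Mat m) P)ᴴ) s t
      = ∑ j : Fin 2, ∑ l : Fin 2, P s.2 j * star (P t.2 l) * A (s.1, j) (t.1, l) := by
  simp only [Matrix.mul_apply, Matrix.conjTranspose_apply, Matrix.kroneckerMap_apply,
    Fintype.sum_prod_type, Matrix.one_apply, ite_mul, one_mul, zero_mul, mul_ite, mul_zero,
    star_mul', star_one, star_zero, apply_ite (star : ℂ → ℂ), Finset.sum_ite_irrel,
    Finset.sum_const_zero, Finset.sum_ite_eq, Finset.sum_ite_eq', Finset.mem_univ, if_true]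
  simp only [Finset.sum_mul]
  rw [Finset.sum_comm]
  exact Finset.sum_congr rfl fun j _ => Finset.sum_congr rfl fun l _ => by ring


lemma KE_eq_sum (hK : chanForm K l1 l2 l3) (p0 p1 p2 p3 : ℝ)
    (e0 : p0 + p1 + p2 + p3 = 1) (e1 : p0 + p1 - p2 - p3 = l1)
    (e2 : p0 - p1 + p2 - p3 = l2) (e3 : p0 - p1 - p2 + p3 = l3)
    (j l s t : Fin 2) :
    K (Matrix.single j l 1) s t
      = (p0 : ℂ) * (pauli 0 s j * star (pauli 0 t l))
        + (p1 : ℂ) * (pauli 1 s j * star (pauli 1 t l))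
        + (p2 : ℂ) * (pauli 2 s j * star (pauli 2 t l))
        + (p3 : ℂ) * (pauli 3 s j * star (pauli 3 t l)) := by
  subst e1 e2 e3
  have e0' : p0 = 1 - p1 - p2 - p3 := by linarith
  subst e0'
  fin_cases j <;> fin_cases l <;> fin_cases s <;> fin_cases t <;>
    simp [K_E00 hK, K_E01 hK, K_E10 hK, K_E11 hK, pauli, Matrix.one_apply,
      Matrix.vecHead, Matrix.vecTail, Complex.star_def, Complex.conj_ofReal] <;>
    push_cast <;> ring

lemma chan_isCP (hK : chanForm K l1 l2 l3) (p0 p1 p2 p3 : ℝ)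
    (hp0 : 0 ≤ p0) (hp1 : 0 ≤ p1) (hp2 : 0 ≤ p2) (hp3 : 0 ≤ p3)
    (e0 : p0 + p1 + p2 + p3 = 1) (e1 : p0 + p1 - p2 - p3 = l1)
    (e2 : p0 - p1 + p2 - p3 = l2) (e3 : p0 - p1 - p2 + p3 = l3) :
    IsCompletelyPositive K := by
  intro m A hA
  set X : Fin 4 → Mat (Fin m × Fin 2) :=
    fun a => Matrix.kroneckerMap (· * ·) (1 : Mat (Fin m)) (pauli a) with hX
  have key : tensorMap LinearMap.id K A
      = (p0 : ℂ) • (X 0 * A * (X 0)ᴴ) + (p1 : ℂ) • (X 1 * A * (X 1)ᴴ)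
        + (p2 : ℂ) • (X 2 * A * (X 2)ᴴ) + (p3 : ℂ) • (X 3 * A * (X 3)ᴴ) := by
    ext s t
    rw [tensorMap_id_apply]
    have step : ∀ j l : Fin 2,
        K (Matrix.single j l 1) s.2 t.2 * A (s.1, j) (t.1, l)
          = (p0 : ℂ) * (pauli 0 s.2 j * star (pauli 0 t.2 l) * A (s.1, j) (t.1, l))
            + (p1 : ℂ) * (pauli 1 s.2 j * star (pauli 1 t.2 l) * A (s.1, j) (t.1, l))
            + (p2 : ℂ) * (pauli 2 s.2 j * star (pauli 2 t.2 l) * A (s.1, j) (t.1, l))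
            + (p3 : ℂ) * (pauli 3 s.2 j * star (pauli 3 t.2 l) * A (s.1, j) (t.1, l)) := by
      intro j l
      rw [KE_eq_sum hK p0 p1 p2 p3 e0 e1 e2 e3]
      ring
    rw [Finset.sum_congr rfl fun j _ => Finset.sum_congr rfl fun l _ => step j l]
    simp only [Finset.sum_add_distrib, Matrix.add_apply, Matrix.smul_apply, hX, conj_entry,
      smul_eq_mul, Finset.mul_sum]
  rw [key]
  exact (((posSemidef_real_smul (hA.mul_mul_conjTranspose_same (X 0)) hp0).add
    (posSemidef_real_smul (hA.mul_mul_conjTranspose_same (X 1)) hp1)).add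
    (posSemidef_real_smul (hA.mul_mul_conjTranspose_same (X 2)) hp2)).add
    (posSemidef_real_smul (hA.mul_mul_conjTranspose_same (X 3)) hp3)


end QHC

namespace QHC

/-- **Lemma 4**: a diagonal generator `H = (h₁, h₂, h₃)` (self-adjoint, positive
semidefinite, `H(I₂) = 0`) generates a completely positive semigroup `e^{-tH}` for all
`t ≥ 0` if and only if `H = a₁ Γ₁ + a₂ Γ₂ + a₃ Γ₃` for some `a₁, a₂, a₃ ≥ 0`, where
`Γ₁ = (0,1,1)`, `Γ₂ = (1,0,1)`, `Γ₃ = (1,1,0)`. -/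
theorem diag_gen_CP_iff_nonneg_combination
    (h₁ h₂ h₃ : ℝ) (H : Mat (Fin 2) →ₗ[ℂ] Mat (Fin 2)) (hG : memG H)
    (hH1 : H (pauli 1) = (h₁ : ℂ) • pauli 1)
    (hH2 : H (pauli 2) = (h₂ : ℂ) • pauli 2)
    (hH3 : H (pauli 3) = (h₃ : ℂ) • pauli 3) :
    (∀ t : ℝ, 0 ≤ t → IsCompletelyPositive (expMap ((-(t : ℂ)) • H))) ↔
      ∃ a₁ a₂ a₃ : ℝ, 0 ≤ a₁ ∧ 0 ≤ a₂ ∧ 0 ≤ a₃ ∧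
        H = (a₁ : ℂ) • diagGen 0 1 1 + (a₂ : ℂ) • diagGen 1 0 1 +
          (a₃ : ℂ) • diagGen 1 1 0 := by
  have hH0 : H 1 = 0 := hG.1
  constructor
  · exact forward_dir h₁ h₂ h₃ H hH0 hH1 hH2 hH3
  · rintro ⟨a₁, a₂, a₃, ha₁, ha₂, ha₃, hHeq⟩ t ht
    have r1 : h₁ = a₂ + a₃ := by
      have e : H (pauli 1) = ((a₁:ℂ) • diagGen 0 1 1 + (a₂:ℂ) • diagGen 1 0 1 +
          (a₃:ℂ) • diagGen 1 1 0) (pauli 1) := by rw [hHeq]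
      rw [hH1] at e
      simp only [LinearMap.add_apply, LinearMap.smul_apply, diagGen_pauli1] at e
      have e' : (h₁:ℂ) • pauli 1 = ((a₂ + a₃ : ℝ):ℂ) • pauli 1 := by
        rw [e]; push_cast; module
      exact_mod_cast smul_pauli_inj 1 (by decide) e'
    have r2 : h₂ = a₁ + a₃ := by
      have e : H (pauli 2) = ((a₁:ℂ) • diagGen 0 1 1 + (a₂:ℂ) • diagGen 1 0 1 +
          (a₃:ℂ) • diagGen 1 1 0) (pauli 2) := by rw [hHeq]
      rw [hH2] at e
      simp only [LinearMap.add_apply, LinearMap.smul_apply, diagGen_pauli2] at e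
      have e' : (h₂:ℂ) • pauli 2 = ((a₁ + a₃ : ℝ):ℂ) • pauli 2 := by
        rw [e]; push_cast; module
      exact_mod_cast smul_pauli_inj 2 (by decide) e'
    have r3 : h₃ = a₁ + a₂ := by
      have e : H (pauli 3) = ((a₁:ℂ) • diagGen 0 1 1 + (a₂:ℂ) • diagGen 1 0 1 +
          (a₃:ℂ) • diagGen 1 1 0) (pauli 3) := by rw [hHeq]
      rw [hH3] at e
      simp only [LinearMap.add_apply, LinearMap.smul_apply, diagGen_pauli3] at e
      have e' : (h₃:ℂ) • pauli 3 = ((a₁ + a₂ : ℝ):ℂ) • pauli 3 := by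
        rw [e]; push_cast; module
      exact_mod_cast smul_pauli_inj 3 (by decide) e'
    set x1 := Real.exp (-(t*h₁)) with hx1
    set x2 := Real.exp (-(t*h₂)) with hx2
    set x3 := Real.exp (-(t*h₃)) with hx3
    have hch : chanForm (expMap ((-(t:ℂ)) • H)) x1 x2 x3 :=
      fun M => expMap_diag_apply h₁ h₂ h₃ t H hH0 hH1 hH2 hH3 M
    have hle : ∀ hᵢ : ℝ, 0 ≤ hᵢ → Real.exp (-(t*hᵢ)) ≤ 1 := by
      intro hᵢ hh
      rw [Real.exp_le_one_iff]
      nlinarith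
    have h1le : x1 ≤ 1 := hle h₁ (by rw [r1]; linarith)
    have h2le : x2 ≤ 1 := hle h₂ (by rw [r2]; linarith)
    have h3le : x3 ≤ 1 := hle h₃ (by rw [r3]; linarith)
    have hprod : ∀ a b c : ℝ, a ≤ b + c →
        Real.exp (-(t*b)) * Real.exp (-(t*c)) ≤ Real.exp (-(t*a)) := by
      intro a b c habc
      rw [← Real.exp_add, Real.exp_le_exp]
      nlinarith
    have hpr1 : x2 * x3 ≤ x1 := hprod h₁ h₂ h₃ (by linarith)
    have hpr2 : x1 * x3 ≤ x2 := hprod h₂ h₁ h₃ (by linarith)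
    have hpr3 : x1 * x2 ≤ x3 := hprod h₃ h₁ h₂ (by linarith)
    have hx1p : 0 < x1 := Real.exp_pos _
    have hx2p : 0 < x2 := Real.exp_pos _
    have hx3p : 0 < x3 := Real.exp_pos _
    apply chan_isCP hch ((1 + x1 + x2 + x3)/4) ((1 + x1 - x2 - x3)/4)
      ((1 - x1 + x2 - x3)/4) ((1 - x1 - x2 + x3)/4)
    · positivity
    · nlinarith [mul_nonneg (sub_nonneg.2 h2le) (sub_nonneg.2 h3le)]
    · nlinarith [mul_nonneg (sub_nonneg.2 h1le) (sub_nonneg.2 h3le)]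
    · nlinarith [mul_nonneg (sub_nonneg.2 h1le) (sub_nonneg.2 h2le)]
    · ring
    · ring
    · ring
    · ring


end QHC
end

section
/- (Gross' Lemma, matrix algebra version.) Let H ∈ G^{CP}, and for n ≥ 1 let H^{(n)} = id_{M_{2^{n-1}}} ⊗ H acting on M_{2^n}. Then for every positive semidefinite A ∈ M_{2^n} and every p > 1, ⟨A^{p/2}, H^{(n)}(A^{p/2})⟩ ≤ ((p/2)^2 / (p-1)) · ⟨A, H^{(n)}(A^{p-1})⟩, where the matrix powers A^{p/2} and A^{p-1} are defined by the functional calculus for positive semidefinite matrices. -/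
open scoped Matrix ComplexOrder

namespace QHC

set_option linter.dupNamespace false
set_option linter.unusedSectionVars false
set_option linter.unusedVariables false
set_option linter.unusedTactic false

variable {a b : Type*} [Fintype a] [DecidableEq a] [Fintype b] [DecidableEq b]

lemma tensor_id_apply (L₂ : Mat b →ₗ[ℂ] Mat b) (M : Mat (a × b)) (s t : a × b) :
    tensorMap LinearMap.id L₂ M s t
      = ∑ j : b, ∑ l : b, L₂ (Matrix.single j l 1) s.2 t.2 * M (s.1, j) (t.1, l) := by
  show (∑ i : a, ∑ k : a, ∑ j : b, ∑ l : b,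
      (LinearMap.id (Matrix.single i k 1) : Mat a) s.1 t.1 *
        L₂ (Matrix.single j l 1) s.2 t.2 * M (i, j) (k, l)) = _
  simp only [LinearMap.id_coe, id_eq, Matrix.single, Matrix.of_apply, ite_mul, one_mul,
    zero_mul, ite_and]
  rw [Finset.sum_eq_single s.1]
  · rw [Finset.sum_eq_single t.1]
    · simp [Matrix.single]
    · intro k _ hk; simp [hk]
    · simp
  · intro i _ hi; simp [hi]
  · simp


lemma sum_stdBasisMatrix_diag : (∑ j : b, Matrix.single j j (1:ℂ)) = 1 := by
  ext i k
  simp only [Matrix.sum_apply, Matrix.single, Matrix.of_apply, ite_and, Matrix.one_apply]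
  rw [Finset.sum_eq_single i] <;> simp_all [eq_comm]

lemma tensor_id_one (L₂ : Mat b →ₗ[ℂ] Mat b) (h1 : L₂ 1 = 0) :
    tensorMap (LinearMap.id (M := Mat a)) L₂ 1 = 0 := by
  ext s t
  rw [tensor_id_apply]
  have step : ∀ j : b, (∑ l : b, L₂ (Matrix.single j l 1) s.2 t.2 *
      (1 : Mat (a × b)) (s.1, j) (t.1, l))
      = if s.1 = t.1 then L₂ (Matrix.single j j 1) s.2 t.2 else 0 := by
    intro j
    rw [Finset.sum_eq_single j]
    · simp [Matrix.one_apply, Prod.ext_iff, mul_comm]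
    · intro l _ hl; simp [Matrix.one_apply, Prod.ext_iff, Ne.symm hl]
    · simp
  simp only [step]
  by_cases h : s.1 = t.1 <;> simp only [h, if_true, if_false, Matrix.zero_apply]
  · rw [← Matrix.sum_apply, ← map_sum,
      sum_stdBasisMatrix_diag, h1, Matrix.zero_apply]
  · simp

lemma tensor_id_id (M : Mat (a × b)) :
    tensorMap (LinearMap.id (M := Mat a)) (LinearMap.id (M := Mat b)) M = M := by
  ext s t
  rw [tensor_id_apply]
  simp only [LinearMap.id_coe, id_eq, Matrix.single, Matrix.of_apply, ite_and, ite_mul,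
    one_mul, zero_mul]
  rw [Finset.sum_eq_single s.2]
  · rw [Finset.sum_eq_single t.2]
    · simp
    · intro l _ hl; simp [hl]
    · simp
  · intro j _ hj; simp [hj]
  · simp

lemma trace_formula (X B : Mat a) :
    (Xᴴ * B).trace = ∑ s : a, ∑ t : a, (starRingEnd ℂ) (X s t) * B s t := by
  simp only [Matrix.trace, Matrix.diag, Matrix.mul_apply, Matrix.conjTranspose_apply,
    starRingEnd_apply]
  rw [Finset.sum_comm]

lemma sum_swap4 {M : Type*} [AddCommMonoid M] (f : b → b → b → b → M) :
    ∑ x1 : b, ∑ x2 : b, ∑ y1 : b, ∑ y2 : b, f x1 x2 y1 y2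
      = ∑ y1 : b, ∑ y2 : b, ∑ x1 : b, ∑ x2 : b, f x1 x2 y1 y2 := by
  trans ∑ x1 : b, ∑ y1 : b, ∑ x2 : b, ∑ y2 : b, f x1 x2 y1 y2
  · exact Finset.sum_congr rfl fun x1 _ => Finset.sum_comm
  trans ∑ y1 : b, ∑ x1 : b, ∑ x2 : b, ∑ y2 : b, f x1 x2 y1 y2
  · exact Finset.sum_comm
  refine Finset.sum_congr rfl fun y1 _ => ?_
  trans ∑ x1 : b, ∑ y2 : b, ∑ x2 : b, f x1 x2 y1 y2
  · exact Finset.sum_congr rfl fun x1 _ => Finset.sum_comm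
  exact Finset.sum_comm

lemma tensor_id_isSelfAdjoint (H : Mat b →ₗ[ℂ] Mat b) (hsa : IsSelfAdjointMap H) :
    IsSelfAdjointMap (tensorMap (LinearMap.id (M := Mat a)) H) := by
  have key : ∀ i k j l : b, starRingEnd ℂ (H (Matrix.single j l 1) i k)
      = H (Matrix.single i k 1) j l := by
    intro i k j l
    have h := hsa (Matrix.single i k 1) (Matrix.single j l 1)
    rw [trace_formula, trace_formula] at h
    simp only [Matrix.single, Matrix.of_apply, ite_and, apply_ite (starRingEnd ℂ),
      map_one, map_zero, ite_mul, one_mul, zero_mul, mul_ite, mul_one, mul_zero,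
      Finset.sum_ite_irrel, Finset.sum_const_zero, Finset.sum_ite_eq, Finset.mem_univ,
      if_true] at h
    simp only [Matrix.single, ite_and]
    rw [h, Complex.conj_conj]
  intro X Y
  rw [trace_formula, trace_formula]
  simp only [tensor_id_apply, map_sum, map_mul, Finset.sum_mul, Finset.mul_sum,
    Fintype.sum_prod_type]
  refine Finset.sum_congr rfl fun s1 _ => ?_
  rw [Finset.sum_comm]
  conv_rhs => rw [Finset.sum_comm]
  refine Finset.sum_congr rfl fun t1 _ => ?_
  conv_rhs => rw [sum_swap4]
  refine Finset.sum_congr rfl fun s2 _ => Finset.sum_congr rfl fun t2 _ =>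
    Finset.sum_congr rfl fun j _ => Finset.sum_congr rfl fun l _ => ?_
  rw [key]
  ring

lemma tensor_id_posSemidef {Φ : Mat (Fin 2) →ₗ[ℂ] Mat (Fin 2)}
    (hΦ : IsCompletelyPositive Φ) (Q : Mat (a × Fin 2)) (hQ : Q.PosSemidef) :
    ((tensorMap LinearMap.id Φ) Q).PosSemidef := by
  classical
  let e : a ≃ Fin (Fintype.card a) := Fintype.equivFin a
  let Q' : Mat (Fin (Fintype.card a) × Fin 2) :=
    Q.submatrix (fun q => (e.symm q.1, q.2)) (fun q => (e.symm q.1, q.2))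
  have hQ' : Q'.PosSemidef := hQ.submatrix _
  have hR' := hΦ (Fintype.card a) Q' hQ'
  have hEq : (tensorMap LinearMap.id Φ) Q
      = ((tensorMap LinearMap.id Φ) Q').submatrix (fun s => (e s.1, s.2)) (fun s => (e s.1, s.2)) := by
    ext s t
    rw [Matrix.submatrix_apply, tensor_id_apply, tensor_id_apply]
    refine Finset.sum_congr rfl fun j _ => Finset.sum_congr rfl fun l _ => ?_
    simp [Q']
  rw [hEq]
  exact hR'.submatrix _

lemma trace_mul_psd_nonneg {P Q : Mat a} (hP : P.PosSemidef) (hQ : Q.PosSemidef) :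
    0 ≤ ((P * Q).trace).re ∧ ((P * Q).trace).im = 0 := by
  obtain ⟨S, hSherm, hSS⟩ : ∃ S : Mat a, Sᴴ = S ∧ S * S = P :=
    by
      open scoped MatrixOrder in
      obtain ⟨X, hX, -, hXX⟩ := CFC.exists_sqrt_of_isSelfAdjoint_of_quasispectrumRestricts
        hP.isHermitian (QuasispectrumRestricts.nnreal_of_nonneg hP.nonneg)
      exact ⟨X, hX, hXX⟩
  subst hSS
  have h1 : (S * S * Q).trace = (Sᴴ * Q * S).trace := by
    rw [hSherm, Matrix.mul_assoc, Matrix.trace_mul_comm, Matrix.mul_assoc]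
  have h2 : (Sᴴ * Q * S).PosSemidef := hQ.conjTranspose_mul_mul_same _
  rw [h1]
  have h3 : 0 ≤ (Sᴴ * Q * S).trace := by
    rw [Matrix.trace]
    apply Finset.sum_nonneg
    intro i _
    rw [Matrix.diag_apply]
    exact h2.diag_nonneg
  rw [Complex.le_def] at h3
  exact ⟨h3.1, h3.2.symm⟩

/-- `tensorMap LinearMap.id` as a linear map in its second argument. -/
noncomputable def tensorIdL :
    (Mat b →ₗ[ℂ] Mat b) →ₗ[ℂ] (Mat (a × b) →ₗ[ℂ] Mat (a × b)) where
  toFun L := tensorMap LinearMap.id L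
  map_add' L L' := by
    apply LinearMap.ext; intro M; ext s t
    simp only [tensor_id_apply, LinearMap.add_apply, Matrix.add_apply, add_mul,
      Finset.sum_add_distrib]
  map_smul' c L := by
    apply LinearMap.ext; intro M; ext s t
    simp only [tensor_id_apply, LinearMap.smul_apply, Matrix.smul_apply, smul_eq_mul,
      RingHom.id_apply, Finset.mul_sum]
    exact Finset.sum_congr rfl fun j _ => Finset.sum_congr rfl fun l _ => by ring

/-- The functional `X ↦ re (Tr (P * (id ⊗ toLin X) Q))` as an `ℝ`-linear map. -/
noncomputable def traceFun (P Q : Mat (a × Fin 2)) :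
    Matrix (Fin 2 × Fin 2) (Fin 2 × Fin 2) ℂ →ₗ[ℝ] ℝ :=
  Complex.reLm.comp
    (((Matrix.traceLinearMap (a × Fin 2) ℂ ℂ).comp
      ((LinearMap.mulLeft ℂ P).comp
        ((LinearMap.applyₗ Q).comp
          ((tensorIdL).comp
            (Matrix.toLin (Matrix.stdBasis ℂ (Fin 2) (Fin 2))
              (Matrix.stdBasis ℂ (Fin 2) (Fin 2))).toLinearMap)))).restrictScalars ℝ)

lemma traceFun_apply (P Q : Mat (a × Fin 2)) (X : Matrix (Fin 2 × Fin 2) (Fin 2 × Fin 2) ℂ) :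
    traceFun P Q X = ((P * (tensorMap LinearMap.id
      (Matrix.toLin (Matrix.stdBasis ℂ (Fin 2) (Fin 2))
        (Matrix.stdBasis ℂ (Fin 2) (Fin 2)) X)) Q).trace).re := rfl

lemma offdiag_nonpos (H : Mat (Fin 2) →ₗ[ℂ] Mat (Fin 2)) (hH : memGCP H)
    (P Q : Mat (a × Fin 2)) (hP : P.PosSemidef) (hQ : Q.PosSemidef)
    (hPQ : (P * Q).trace = 0) :
    ((P * (tensorMap LinearMap.id H) Q).trace).re ≤ 0 := by
  classical
  letI : SeminormedRing (Matrix (Fin 2 × Fin 2) (Fin 2 × Fin 2) ℂ) := Matrix.linftyOpSemiNormedRing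
  letI : NormedRing (Matrix (Fin 2 × Fin 2) (Fin 2 × Fin 2) ℂ) := Matrix.linftyOpNormedRing
  letI : NormedAlgebra ℝ (Matrix (Fin 2 × Fin 2) (Fin 2 × Fin 2) ℂ) := Matrix.linftyOpNormedAlgebra
  letI : NormedAlgebra ℂ (Matrix (Fin 2 × Fin 2) (Fin 2 × Fin 2) ℂ) := Matrix.linftyOpNormedAlgebra
  set bb := Matrix.stdBasis ℂ (Fin 2) (Fin 2) with hbb
  set B := LinearMap.toMatrix bb bb H with hB
  set ℓ := traceFun P Q with hℓ
  set g : ℝ → Matrix (Fin 2 × Fin 2) (Fin 2 × Fin 2) ℂ :=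
    fun t => NormedSpace.exp (-(t • B)) with hg
  set f : ℝ → ℝ := fun t => ℓ (g t) with hf
  -- the function f agrees with the trace along the semigroup
  have hfeq : ∀ t : ℝ, f t = ((P * (tensorMap LinearMap.id
      (expMap ((-(t : ℂ)) • H))) Q).trace).re := by
    intro t
    have h1 : g t = NormedSpace.exp (LinearMap.toMatrix bb bb ((-(t : ℂ)) • H)) := by
      rw [hg]
      congr 1
      rw [map_smul]
      ext i j
      simp [Complex.real_smul]
      rfl
    show ℓ (g t) = _
    rw [h1, hℓ, traceFun_apply]
    rfl
  -- nonnegativity of f for t ≥ 0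
  have hfnonneg : ∀ t : ℝ, 0 ≤ t → 0 ≤ f t := by
    intro t ht
    rw [hfeq t]
    exact (trace_mul_psd_nonneg hP
      (tensor_id_posSemidef (hH.2 t ht) Q hQ)).1
  -- f 0 = 0
  have hf0 : f 0 = 0 := by
    have hg0 : g 0 = 1 := by rw [hg]; simp [NormedSpace.exp_zero]
    show ℓ (g 0) = 0
    rw [hg0, hℓ, traceFun_apply, Matrix.toLin_one, tensor_id_id, hPQ]
    simp
  -- derivative of f at 0
  have hgd : HasDerivAt g (-B) 0 := by
    have := _root_.hasDerivAt_exp_smul_const (𝕂 := ℝ) (-B) (0 : ℝ)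
    simp only [zero_smul, smul_neg, neg_zero, NormedSpace.exp_zero, one_mul] at this
    exact this
  have hcont : Continuous ℓ := ℓ.continuous_of_finiteDimensional
  set ℓc := LinearMap.toContinuousLinearMap ℓ with hℓc
  have hfd : HasDerivAt f (ℓ (-B)) 0 := by
    have h := (ℓc.hasFDerivAt (x := g 0)).comp_hasDerivAt 0 hgd
    exact h
  -- the derivative is nonnegative
  have hd0 : 0 ≤ ℓ (-B) := by
    have hW : HasDerivWithinAt f (ℓ (-B)) (Set.Ioi 0) 0 := hfd.hasDerivWithinAt
    rw [hasDerivWithinAt_iff_tendsto_slope] at hW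
    have hIoi : Set.Ioi (0:ℝ) \ {0} = Set.Ioi 0 := by
      rw [Set.diff_singleton_eq_self]; simp
    rw [hIoi] at hW
    refine ge_of_tendsto hW ?_
    filter_upwards [self_mem_nhdsWithin] with t ht
    rw [slope_def_field, hf0]
    have ht' : (0:ℝ) < t := ht
    have h2 := hfnonneg t ht'.le
    apply div_nonneg <;> linarith
  -- conclude
  have : ℓ (-B) = -((P * (tensorMap LinearMap.id H) Q).trace).re := by
    rw [hℓ, map_neg, traceFun_apply, hB, Matrix.toLin_toMatrix]
  linarith [hd0, this ▸ hd0]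

section Spectral

variable {ι : Type*} [Fintype ι] [DecidableEq ι]

/-- Rank-one spectral projections of a Hermitian matrix. -/
noncomputable def specProj {A : Mat ι} (hA : A.IsHermitian) (i : ι) : Mat ι :=
  (hA.eigenvectorUnitary : Mat ι) * Matrix.diagonal (fun k => if k = i then (1:ℂ) else 0) *
    (hA.eigenvectorUnitary : Mat ι)ᴴ

lemma specProj_herm {A : Mat ι} (hA : A.IsHermitian) (i : ι) :
    (specProj hA i)ᴴ = specProj hA i := by
  unfold specProj
  have hstar : star (fun k => if k = i then (1:ℂ) else 0) = (fun k => if k = i then (1:ℂ) else 0) := by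
    funext k; by_cases hk : k = i <;> simp [hk]
  rw [Matrix.conjTranspose_mul, Matrix.conjTranspose_mul, Matrix.conjTranspose_conjTranspose,
    Matrix.diagonal_conjTranspose, hstar, Matrix.mul_assoc]

lemma specProj_psd {A : Mat ι} (hA : A.IsHermitian) (i : ι) :
    (specProj hA i).PosSemidef := by
  have hD : (Matrix.diagonal (fun k => if k = i then (1:ℂ) else 0)).PosSemidef := by
    rw [Matrix.posSemidef_diagonal_iff]
    intro k
    split
    · exact zero_le_one
    · exact le_refl 0
  exact hD.mul_mul_conjTranspose_same _

lemma diagonal_eq_sum_proj (v : ι → ℂ) :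
    Matrix.diagonal v = ∑ i, v i • Matrix.diagonal (fun k => if k = i then (1:ℂ) else 0) := by
  ext k l
  by_cases h : k = l
  · subst h
    simp [Matrix.diagonal_apply, Matrix.sum_apply]
  · simp [Matrix.diagonal_apply_ne _ h, Matrix.sum_apply, Matrix.diagonal_apply, h]

lemma conj_diagonal_eq_sum {A : Mat ι} (hA : A.IsHermitian) (v : ι → ℂ) :
    (hA.eigenvectorUnitary : Mat ι) * Matrix.diagonal v * (hA.eigenvectorUnitary : Mat ι)ᴴ
      = ∑ i, v i • specProj hA i := by
  rw [diagonal_eq_sum_proj, Finset.mul_sum, Finset.sum_mul]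
  refine Finset.sum_congr rfl fun i _ => ?_
  rw [Matrix.mul_smul, Matrix.smul_mul]
  rfl

lemma sum_specProj {A : Mat ι} (hA : A.IsHermitian) : (∑ i, specProj hA i) = 1 := by
  have h := conj_diagonal_eq_sum hA (fun _ => (1:ℂ))
  rw [Matrix.diagonal_one] at h
  have hU : (hA.eigenvectorUnitary : Mat ι) * 1 * (hA.eigenvectorUnitary : Mat ι)ᴴ = 1 := by
    rw [Matrix.mul_one, ← Matrix.star_eq_conjTranspose]
    exact Matrix.mem_unitaryGroup_iff.mp hA.eigenvectorUnitary.2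
  rw [hU] at h
  simp only [one_smul] at h
  exact h.symm

lemma specProj_mul_specProj {A : Mat ι} (hA : A.IsHermitian) (i j : ι) :
    ((specProj hA i) * (specProj hA j)).trace = if i = j then 1 else 0 := by
  unfold specProj
  have hU' : (hA.eigenvectorUnitary : Mat ι)ᴴ * (hA.eigenvectorUnitary : Mat ι) = 1 := by
    rw [← Matrix.star_eq_conjTranspose]
    exact Matrix.mem_unitaryGroup_iff'.mp hA.eigenvectorUnitary.2
  set U := (hA.eigenvectorUnitary : Mat ι)
  set Di := Matrix.diagonal (fun k => if k = i then (1:ℂ) else 0)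
  set Dj := Matrix.diagonal (fun k => if k = j then (1:ℂ) else 0)
  have hUX : ∀ X : Mat ι, Uᴴ * (U * X) = X := by
    intro X; rw [← Matrix.mul_assoc, hU', Matrix.one_mul]
  have h1 : U * Di * Uᴴ * (U * Dj * Uᴴ) = U * (Di * Dj) * Uᴴ := by
    simp only [Matrix.mul_assoc]
    rw [hUX]
  rw [h1, Matrix.trace_mul_comm, ← Matrix.mul_assoc, hU', Matrix.one_mul]
  rw [Matrix.diagonal_mul_diagonal, Matrix.trace_diagonal]
  by_cases h : i = j
  · subst h
    rw [Finset.sum_eq_single i] <;> simp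
  · rw [if_neg h]
    apply Finset.sum_eq_zero
    intro k _
    by_cases hk : k = i <;> simp [hk, h]

lemma posSemidef_eq_sum_specProj {A : Mat ι} (hA : A.PosSemidef) :
    A = ∑ i, ((hA.isHermitian.eigenvalues i : ℝ) : ℂ) • specProj hA.isHermitian i := by
  have h := hA.isHermitian.spectral_theorem
  nth_rewrite 1 [h]
  rw [Unitary.conjStarAlgAut_apply, Matrix.star_eq_conjTranspose, conj_diagonal_eq_sum hA.isHermitian]
  rfl

lemma posPow_eq_sum_specProj {A : Mat ι} (hA : A.PosSemidef) (r : ℝ) :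
    posPow A hA.isHermitian r
      = ∑ i, ((hA.isHermitian.eigenvalues i ^ r : ℝ) : ℂ) • specProj hA.isHermitian i := by
  unfold posPow herFun
  rw [conj_diagonal_eq_sum hA.isHermitian]

end Spectral

section TwoPoint

open intervalIntegral in
lemma two_point_aux {p : ℝ} (hp : 1 < p) {x y : ℝ} (hy : 0 ≤ y) (hxy : y ≤ x) :
    (x ^ (p/2) - y ^ (p/2))^2 ≤ (p/2)^2/(p-1) * ((x - y) * (x ^ (p-1) - y ^ (p-1))) := by
  rcases eq_or_lt_of_le hxy with heq | hlt
  · subst heq; simp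
  have hxsub : 0 < x - y := by linarith
  have h2 : (-1:ℝ) < p/2 - 1 := by linarith
  have h3 : (-1:ℝ) < p - 2 := by linarith
  have hp2 : (0:ℝ) < p/2 := by linarith
  have hp1 : (0:ℝ) < p - 1 := by linarith
  set I := ∫ t in y..x, t ^ (p/2-1) with hI
  set J := ∫ t in y..x, t ^ (p-2) with hJ
  have hint1 : IntervalIntegrable (fun t : ℝ => t ^ (p/2-1)) MeasureTheory.volume y x :=
    intervalIntegral.intervalIntegrable_rpow' h2
  have hint2 : IntervalIntegrable (fun t : ℝ => t ^ (p-2)) MeasureTheory.volume y x :=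
    intervalIntegral.intervalIntegrable_rpow' h3
  have I1 : I = (x ^ (p/2) - y ^ (p/2)) / (p/2) := by
    rw [hI, integral_rpow (Or.inl h2)]
    have : p/2 - 1 + 1 = p/2 := by ring
    rw [this]
  have I2 : J = (x ^ (p-1) - y ^ (p-1)) / (p-1) := by
    rw [hJ, integral_rpow (Or.inl h3)]
    have : p - 2 + 1 = p - 1 := by ring
    rw [this]
  set c := I / (x - y) with hc
  have hnn : 0 ≤ ∫ t in y..x, ((t:ℝ) ^ (p/2-1) - c)^2 := by
    apply intervalIntegral.integral_nonneg hxy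
    intro u _
    positivity
  have hexp : ∫ t in y..x, ((t:ℝ) ^ (p/2-1) - c)^2 = J - 2*c*I + (x - y) * c^2 := by
    have hpt : Set.EqOn (fun t : ℝ => ((t:ℝ) ^ (p/2-1) - c)^2)
        (fun t : ℝ => t^(p-2) - (2*c)*t^(p/2-1) + c^2) (Set.uIcc y x) := by
      intro t ht
      rw [Set.uIcc_of_le hxy] at ht
      have ht0 : 0 ≤ t := le_trans hy ht.1
      have hsq : (t ^ (p/2-1))^2 = t^(p-2) := by
        rw [← Real.rpow_natCast (t ^ (p/2-1)) 2, ← Real.rpow_mul ht0]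
        congr 1
        push_cast
        ring
      show ((t:ℝ) ^ (p/2-1) - c)^2 = t^(p-2) - (2*c)*t^(p/2-1) + c^2
      rw [← hsq]; ring
    rw [intervalIntegral.integral_congr hpt]
    rw [intervalIntegral.integral_add (hint2.sub (hint1.const_mul (2*c)))
      intervalIntegrable_const]
    rw [intervalIntegral.integral_sub hint2 (hint1.const_mul (2*c))]
    rw [intervalIntegral.integral_const_mul, intervalIntegral.integral_const]
    rw [← hI, ← hJ]
    simp only [smul_eq_mul]
    try ring
  have key : I^2 ≤ (x - y) * J := by
    rw [hexp] at hnn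
    have hrw : J - 2*c*I + (x - y) * c^2 = J - I^2/(x-y) := by
      rw [hc]; field_simp; try ring
    rw [hrw] at hnn
    have := (div_le_iff₀ hxsub).mp (by linarith : I^2/(x-y) ≤ J)
    linarith [this]
  rw [I1, I2] at key
  have hfin : ((x ^ (p/2) - y ^ (p/2)) / (p/2))^2 * (p/2)^2
      = (x ^ (p/2) - y ^ (p/2))^2 := by
    field_simp
    try ring
  have step := mul_le_mul_of_nonneg_left key (le_of_lt (by positivity : (0:ℝ) < (p/2)^2))
  calc (x ^ (p/2) - y ^ (p/2))^2
      = (p/2)^2 * (((x ^ (p/2) - y ^ (p/2)) / (p/2))^2) := by rw [← hfin]; ring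
    _ ≤ (p/2)^2 * ((x - y) * ((x ^ (p-1) - y ^ (p-1)) / (p-1))) := step
    _ = (p/2)^2/(p-1) * ((x - y) * (x ^ (p-1) - y ^ (p-1))) := by
        field_simp
        try ring

lemma two_point {p : ℝ} (hp : 1 < p) {x y : ℝ} (hx : 0 ≤ x) (hy : 0 ≤ y) :
    (x ^ (p/2) - y ^ (p/2))^2 ≤ (p/2)^2/(p-1) * ((x - y) * (x ^ (p-1) - y ^ (p-1))) := by
  rcases le_total y x with h | h
  · exact two_point_aux hp hy h
  · have := two_point_aux hp hx h
    have hs1 : (x ^ (p/2) - y ^ (p/2))^2 = (y ^ (p/2) - x ^ (p/2))^2 := by ring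
    have hs2 : (x - y) * (x ^ (p-1) - y ^ (p-1)) = (y - x) * (y ^ (p-1) - x ^ (p-1)) := by ring
    rw [hs1, hs2]
    exact this

end TwoPoint

section QuadForm

variable {ι : Type*} [Fintype ι]

lemma quad_ineq (c : ι → ι → ℝ) (K : ℝ)
    (hsym : ∀ i j, c i j = c j i) (hrow : ∀ i, ∑ j, c i j = 0)
    (hoff : ∀ i j, i ≠ j → c i j ≤ 0) (x av y : ι → ℝ)
    (hpt : ∀ i j, (x i - x j)^2 ≤ K * ((av i - av j) * (y i - y j))) :
    ∑ i, ∑ j, x i * x j * c i j ≤ K * ∑ i, ∑ j, av i * y j * c i j := by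
  have hcol : ∀ j, ∑ i, c i j = 0 := by
    intro j
    rw [Finset.sum_congr rfl (fun i _ => hsym i j)]
    exact hrow j
  have idA : ∑ i, ∑ j, c i j * (x i - x j)^2 = -2 * ∑ i, ∑ j, x i * x j * c i j := by
    have e1 : ∀ i j, c i j * (x i - x j)^2
        = x i^2 * c i j + x j^2 * c i j - 2*(x i * x j * c i j) := fun i j => by ring
    simp only [e1, Finset.sum_sub_distrib, Finset.sum_add_distrib]
    have h1 : ∑ i, ∑ j, x i^2 * c i j = 0 :=
      Finset.sum_eq_zero fun i _ => by rw [← Finset.mul_sum, hrow i, mul_zero]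
    have h2 : ∑ i : ι, ∑ j, x j^2 * c i j = 0 := by
      rw [Finset.sum_comm]
      exact Finset.sum_eq_zero fun j _ => by rw [← Finset.mul_sum, hcol j, mul_zero]
    rw [h1, h2]
    simp only [← Finset.mul_sum]
    ring
  have idB : ∑ i, ∑ j, c i j * ((av i - av j) * (y i - y j))
      = -2 * ∑ i, ∑ j, av i * y j * c i j := by
    have e1 : ∀ i j, c i j * ((av i - av j) * (y i - y j))
        = (av i * y i) * c i j + (av j * y j) * c i j
          - (av i * y j * c i j) - (av j * y i * c i j) := fun i j => by ring
    simp only [e1, Finset.sum_sub_distrib, Finset.sum_add_distrib]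
    have h1 : ∑ i, ∑ j, (av i * y i) * c i j = 0 :=
      Finset.sum_eq_zero fun i _ => by rw [← Finset.mul_sum, hrow i, mul_zero]
    have h2 : ∑ i : ι, ∑ j, (av j * y j) * c i j = 0 := by
      rw [Finset.sum_comm]
      exact Finset.sum_eq_zero fun j _ => by rw [← Finset.mul_sum, hcol j, mul_zero]
    have h3 : ∑ i, ∑ j, av j * y i * c i j = ∑ i, ∑ j, av i * y j * c i j := by
      rw [Finset.sum_comm]
      refine Finset.sum_congr rfl fun i _ => Finset.sum_congr rfl fun j _ => ?_
      rw [hsym j i]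
    rw [h1, h2, h3]
    ring
  have main : K * ∑ i, ∑ j, c i j * ((av i - av j) * (y i - y j))
      ≤ ∑ i, ∑ j, c i j * (x i - x j)^2 := by
    rw [Finset.mul_sum]
    refine Finset.sum_le_sum fun i _ => ?_
    rw [Finset.mul_sum]
    refine Finset.sum_le_sum fun j _ => ?_
    rcases eq_or_ne i j with rfl | hij
    · simp
    · have hc := hoff i j hij
      have h := hpt i j
      nlinarith [h, hc]
  rw [idA, idB] at main
  linarith [main]

end QuadForm

lemma trace_conj_swap (M N : Mat a) :
    (Mᴴ * N).trace = starRingEnd ℂ ((Nᴴ * M).trace) := by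
  rw [trace_formula, trace_formula, map_sum]
  refine Finset.sum_congr rfl fun s _ => ?_
  rw [map_sum]
  refine Finset.sum_congr rfl fun t _ => ?_
  rw [map_mul, Complex.conj_conj, mul_comm]

section Bilinear

variable {ι : Type*} [Fintype ι] [DecidableEq ι]

lemma trace_re_bilinear (P : ι → Mat ι) (hP : ∀ i, (P i)ᴴ = P i)
    (L : Mat ι →ₗ[ℂ] Mat ι) (x y : ι → ℝ) :
    (((∑ i, ((x i : ℝ) : ℂ) • P i)ᴴ) * L (∑ j, ((y j : ℝ) : ℂ) • P j)).trace.re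
      = ∑ i, ∑ j, x i * y j * ((P i * L (P j)).trace).re := by
  rw [map_sum, Matrix.conjTranspose_sum]
  simp only [map_smul, Matrix.conjTranspose_smul, hP, Finset.sum_mul, Finset.mul_sum,
    Matrix.smul_mul, Matrix.mul_smul, Matrix.trace_sum, Matrix.trace_smul, smul_smul,
    Complex.re_sum]
  rw [Finset.sum_comm]
  refine Finset.sum_congr rfl fun i _ => Finset.sum_congr rfl fun j _ => ?_
  rw [RCLike.star_def, Complex.conj_ofReal, ← Complex.ofReal_mul, smul_eq_mul,
    Complex.re_ofReal_mul]
  ring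

end Bilinear


/-- **Gross' Lemma, matrix algebra version** (Lemma 5): for `H ∈ G^{CP}`,
`H⁽ⁿ⁾ = id_{2^{n-1}} ⊗ H`, any positive semidefinite `A ∈ M_{2ⁿ}` and `p > 1`,
`⟨A^{p/2}, H⁽ⁿ⁾(A^{p/2})⟩ ≤ ((p/2)²/(p-1)) ⟨A, H⁽ⁿ⁾(A^{p-1})⟩`. -/
theorem gross_lemma_matrix
    (H : Mat (Fin 2) →ₗ[ℂ] Mat (Fin 2)) (hH : memGCP H) (n : ℕ) (hn : 1 ≤ n)
    (A : Mat ((Fin (n - 1) → Fin 2) × Fin 2)) (hA : A.PosSemidef) (p : ℝ) (hp : 1 < p) :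
    ((posPow A hA.isHermitian (p / 2))ᴴ *
        (tensorMap LinearMap.id H) (posPow A hA.isHermitian (p / 2))).trace.re ≤
      (p / 2) ^ 2 / (p - 1) *
        (Aᴴ * (tensorMap LinearMap.id H) (posPow A hA.isHermitian (p - 1))).trace.re := by

  classical
  set L := tensorMap (LinearMap.id (R := ℂ) (M := Mat (Fin (n - 1) → Fin 2))) H with hLdef
  have hPH : ∀ i, (specProj hA.isHermitian i)ᴴ = specProj hA.isHermitian i :=
    fun i => specProj_herm hA.isHermitian i
  have hL1 : L 1 = 0 := tensor_id_one H hH.1.1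
  have hLsa : IsSelfAdjointMap L := tensor_id_isSelfAdjoint H hH.1.2.1
  set c : ((Fin (n - 1) → Fin 2) × Fin 2) → ((Fin (n - 1) → Fin 2) × Fin 2) → ℝ :=
    fun i j => ((specProj hA.isHermitian i * L (specProj hA.isHermitian j)).trace).re with hcdef
  have hsym : ∀ i j, c i j = c j i := by
    intro i j
    have h2 := hLsa (specProj hA.isHermitian i) (specProj hA.isHermitian j)
    have h3 := trace_conj_swap (L (specProj hA.isHermitian i)) (specProj hA.isHermitian j)
    show ((specProj hA.isHermitian i * L (specProj hA.isHermitian j)).trace).re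
      = ((specProj hA.isHermitian j * L (specProj hA.isHermitian i)).trace).re
    calc ((specProj hA.isHermitian i * L (specProj hA.isHermitian j)).trace).re
        = (((specProj hA.isHermitian i)ᴴ * L (specProj hA.isHermitian j)).trace).re := by
          rw [hPH]
      _ = (((L (specProj hA.isHermitian i))ᴴ * specProj hA.isHermitian j).trace).re := by
          rw [h2]
      _ = ((starRingEnd ℂ)
            (((specProj hA.isHermitian j)ᴴ * L (specProj hA.isHermitian i)).trace)).re := by
          rw [h3]
      _ = (((specProj hA.isHermitian j)ᴴ * L (specProj hA.isHermitian i)).trace).re :=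
          Complex.conj_re _
      _ = ((specProj hA.isHermitian j * L (specProj hA.isHermitian i)).trace).re := by
          rw [hPH]
  have hrow : ∀ i, ∑ j, c i j = 0 := by
    intro i
    show ∑ j, ((specProj hA.isHermitian i * L (specProj hA.isHermitian j)).trace).re = 0
    rw [← Complex.re_sum, ← Matrix.trace_sum, ← Finset.mul_sum, ← map_sum, sum_specProj,
      hL1, Matrix.mul_zero, Matrix.trace_zero, Complex.zero_re]
  have hoff : ∀ i j, i ≠ j → c i j ≤ 0 := by
    intro i j hij
    apply offdiag_nonpos H hH _ _ (specProj_psd hA.isHermitian i) (specProj_psd hA.isHermitian j)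
    rw [specProj_mul_specProj, if_neg hij]
  have hev : ∀ i, 0 ≤ hA.isHermitian.eigenvalues i := fun i => hA.eigenvalues_nonneg i
  have hLHS : ((posPow A hA.isHermitian (p / 2))ᴴ * L (posPow A hA.isHermitian (p / 2))).trace.re
      = ∑ i, ∑ j, (hA.isHermitian.eigenvalues i ^ (p/2)) * (hA.isHermitian.eigenvalues j ^ (p/2))
          * c i j := by
    rw [posPow_eq_sum_specProj hA (p/2)]
    exact trace_re_bilinear _ hPH L (fun i => hA.isHermitian.eigenvalues i ^ (p/2))
      (fun i => hA.isHermitian.eigenvalues i ^ (p/2))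
  have hRHS : (Aᴴ * L (posPow A hA.isHermitian (p - 1))).trace.re
      = ∑ i, ∑ j, (hA.isHermitian.eigenvalues i) * (hA.isHermitian.eigenvalues j ^ (p-1))
          * c i j := by
    nth_rewrite 1 [posSemidef_eq_sum_specProj hA]
    rw [posPow_eq_sum_specProj hA (p-1)]
    exact trace_re_bilinear _ hPH L (fun i => hA.isHermitian.eigenvalues i)
      (fun i => hA.isHermitian.eigenvalues i ^ (p-1))
  rw [hLHS, hRHS]
  exact quad_ineq c ((p/2)^2/(p-1)) hsym hrow hoff
    (fun i => hA.isHermitian.eigenvalues i ^ (p/2))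
    (fun i => hA.isHermitian.eigenvalues i)
    (fun i => hA.isHermitian.eigenvalues i ^ (p-1))
    (fun i j => two_point hp (hev i) (hev j))

end QHC
end

section
/- Let H ∈ G be a self-adjoint positive semidefinite qubit generator with ||H||_min ≥ 1, let n ≥ 1 and 1 ≤ k ≤ n, and let H^{(k)} = id_{M_{2^{k-1}}} ⊗ H ⊗ id_{M_{2^{n-k}}} and H_u^{(k)} = id_{M_{2^{k-1}}} ⊗ H_u ⊗ id_{M_{2^{n-k}}}, where H_u(M) = M − (1/2) Tr(M) I_2 is the uniform generator. Then for every Hermitian A ∈ M_{2^n}, Tr(A · H^{(k)}(A)) ≥ Tr(A · H_u^{(k)}(A)). -/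
open scoped Matrix ComplexOrder

namespace QHC


section Helpers

variable {n : ℕ}

lemma trace_conjT_mul {a : Type*} [Fintype a] [DecidableEq a] (M N : Mat a) :
    (Mᴴ * N).trace = ∑ i : a, ∑ j : a, (starRingEnd ℂ) (M i j) * N i j := by
  simp only [Matrix.trace, Matrix.diag, Matrix.mul_apply, Matrix.conjTranspose_apply]
  rw [Finset.sum_comm]
  rfl

lemma re_trace_conjT_mul_self {a : Type*} [Fintype a] [DecidableEq a] (M : Mat a) :
    ((Mᴴ * M).trace).re = ∑ i : a, ∑ j : a, Complex.normSq (M i j) := by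
  rw [trace_conjT_mul, Complex.re_sum]
  refine Finset.sum_congr rfl fun i _ => ?_
  rw [Complex.re_sum]
  refine Finset.sum_congr rfl fun j _ => ?_
  rw [← Complex.normSq_eq_conj_mul_self]; exact Complex.ofReal_re _

lemma re_trace_conjT_mul_self_nonneg {a : Type*} [Fintype a] [DecidableEq a] (M : Mat a) :
    0 ≤ ((Mᴴ * M).trace).re := by
  rw [re_trace_conjT_mul_self]
  exact Finset.sum_nonneg fun i _ => Finset.sum_nonneg fun j _ => Complex.normSq_nonneg _

lemma re_trace_conjT_mul_self_pos {a : Type*} [Fintype a] [DecidableEq a] (M : Mat a)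
    (hM : M ≠ 0) : 0 < ((Mᴴ * M).trace).re := by
  rw [re_trace_conjT_mul_self]
  obtain ⟨i, j, hij⟩ : ∃ i j, M i j ≠ 0 := by
    by_contra h
    push_neg at h
    exact hM (by ext i j; simpa using h i j)
  refine Finset.sum_pos' (fun i _ => Finset.sum_nonneg fun j _ => Complex.normSq_nonneg _)
    ⟨i, Finset.mem_univ i, Finset.sum_pos' (fun j _ => Complex.normSq_nonneg _)
      ⟨j, Finset.mem_univ j, by simpa using (Complex.normSq_pos).mpr hij⟩⟩

/-- The core scalar inequality: the Rayleigh quotient bound beats the uniform generator. -/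
lemma core_ineq (H : Mat (Fin 2) →ₗ[ℂ] Mat (Fin 2)) (hG : memG H) (hmin : 1 ≤ normMin H)
    (M : Mat (Fin 2)) :
    ((Mᴴ * uniformGen M).trace).re ≤ ((Mᴴ * H M).trace).re := by
  set c : ℂ := M.trace / 2 with hc
  set M₀ : Mat (Fin 2) := M - c • 1 with hM₀
  have htr0 : M₀.trace = 0 := by
    simp only [hM₀, Matrix.trace_sub, Matrix.trace_smul, Matrix.trace_one, hc]
    simp only [smul_eq_mul, Fintype.card_fin]
    push_cast
    ring
  have hu : uniformGen M = M₀ := rfl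
  have hHM : H M = H M₀ := by
    have : M = M₀ + c • 1 := by simp [hM₀]
    rw [this, map_add, map_smul, hG.1]
    simp
  have htrH0 : (H M₀).trace = 0 := by
    have h := hG.2.1 1 M₀
    simpa [hG.1] using h
  have hMH : Mᴴ = M₀ᴴ + (starRingEnd ℂ) c • 1 := by
    simp [hM₀]
  have e1 : (Mᴴ * H M).trace = (M₀ᴴ * H M₀).trace := by
    rw [hHM, hMH, Matrix.add_mul, Matrix.trace_add, Matrix.smul_mul, Matrix.one_mul,
      Matrix.trace_smul, htrH0]
    simp
  have e2 : (Mᴴ * uniformGen M).trace = (M₀ᴴ * M₀).trace := by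
    rw [hu, hMH, Matrix.add_mul, Matrix.trace_add, Matrix.smul_mul, Matrix.one_mul,
      Matrix.trace_smul, htr0]
    simp
  rw [e1, e2]
  by_cases h0 : M₀ = 0
  · simp [h0]
  · have hden : 0 < ((M₀ᴴ * M₀).trace).re := re_trace_conjT_mul_self_pos M₀ h0
    have hbdd : BddBelow (Set.range fun (N : {N : Mat (Fin 2) // N.trace = 0 ∧ N ≠ 0}) =>
        ((N.1ᴴ * H N.1).trace).re / ((N.1ᴴ * N.1).trace).re) := by
      refine ⟨0, ?_⟩
      rintro x ⟨N, rfl⟩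
      have hnum : 0 ≤ ((N.1ᴴ * H N.1).trace).re := by
        have := hG.2.2 N.1
        rw [Complex.le_def] at this
        simpa using this.1
      exact div_nonneg hnum (re_trace_conjT_mul_self_nonneg N.1)
    have h1 : normMin H ≤ ((M₀ᴴ * H M₀).trace).re / ((M₀ᴴ * M₀).trace).re :=
      ciInf_le hbdd ⟨M₀, htr0, h0⟩
    have h2 : 1 ≤ ((M₀ᴴ * H M₀).trace).re / ((M₀ᴴ * M₀).trace).re := le_trans hmin h1
    exact (one_le_div hden).mp h2

noncomputable abbrev esp (k : Fin n) := Equiv.funSplitAt k (Fin 2)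

lemma esp_symm_k (k : Fin n) (p : Fin 2 × ({j : Fin n // j ≠ k} → Fin 2)) :
    (esp k).symm p k = p.1 := by
  simp [esp, Equiv.funSplitAt_symm_apply]

lemma esp_symm_ne (k : Fin n) (p : Fin 2 × ({j : Fin n // j ≠ k} → Fin 2)) (j : Fin n)
    (h : j ≠ k) : (esp k).symm p j = p.2 ⟨j, h⟩ := by
  simp [esp, Equiv.funSplitAt_symm_apply, h]

lemma collapse2 {α β : Type*} [Fintype α] [DecidableEq α] [Fintype β] [DecidableEq β]
    (a : α) (b : β) (g : α → β → ℂ) :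
    (∑ x : α, ∑ y : β, (if x = a ∧ y = b then 1 else 0) * g x y) = g a b := by
  simp [ite_and, ite_mul, Finset.sum_ite_eq]

lemma stdBasis_entry (i j a b : Fin 2) :
    Matrix.single i j (1 : ℂ) a b = if i = a ∧ j = b then 1 else 0 := rfl

/-- Entry formula for the one-site tensor embedding. -/
lemma tensorPow_single_entry (k : Fin n) (L : Mat (Fin 2) →ₗ[ℂ] Mat (Fin 2))
    (A : Mat (Fin n → Fin 2)) (s t : Fin n → Fin 2) :
    (tensorPow (fun j => if j = k then L else LinearMap.id) A) s t
      = ∑ c : Fin 2, ∑ d : Fin 2, L (Matrix.single c d 1) (s k) (t k) *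
          A ((esp k).symm (c, fun j => s j)) ((esp k).symm (d, fun j => t j)) := by
  show (∑ u : Fin n → Fin 2, ∑ v : Fin n → Fin 2,
      (∏ j, ((fun j => if j = k then L else LinearMap.id) j)
        (Matrix.single (u j) (v j) 1) (s j) (t j)) * A u v) = _
  -- step 1: split the product at k
  have hprod : ∀ u v : Fin n → Fin 2,
      (∏ j, ((fun j => if j = k then L else LinearMap.id) j)
        (Matrix.single (u j) (v j) 1) (s j) (t j))
      = L (Matrix.single (u k) (v k) 1) (s k) (t k) *
        (if ∀ j ∈ Finset.univ.erase k, u j = s j ∧ v j = t j then 1 else 0) := by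
    intro u v
    rw [← Finset.mul_prod_erase Finset.univ _ (Finset.mem_univ k)]
    congr 1
    · simp
    · have hb : (∏ j ∈ Finset.univ.erase k, if u j = s j ∧ v j = t j then (1:ℂ) else 0)
          = if ∀ j ∈ Finset.univ.erase k, u j = s j ∧ v j = t j then (1:ℂ) else 0 := by
        rw [Finset.prod_boole]; congr
      rw [← hb]
      refine Finset.prod_congr rfl fun j hj => ?_
      have hjk : j ≠ k := (Finset.mem_erase.mp hj).1
      simp [hjk, stdBasis_entry]
  simp only [hprod]
  simp only [← Equiv.sum_comp (esp k).symm]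
  simp only [Fintype.sum_prod_type]
  have hind : ∀ (c : Fin 2) (u' : {j : Fin n // j ≠ k} → Fin 2) (d : Fin 2)
      (v' : {j : Fin n // j ≠ k} → Fin 2),
      (∀ j ∈ Finset.univ.erase k, (esp k).symm (c, u') j = s j ∧ (esp k).symm (d, v') j = t j)
        ↔ (u' = fun j => s j.1) ∧ (v' = fun j => t j.1) := by
    intro c u' d v'
    constructor
    · intro h
      constructor <;> funext j'
      · have h1 := (h j'.1 (Finset.mem_erase.mpr ⟨j'.2, Finset.mem_univ _⟩)).1
        rwa [esp_symm_ne k (c, u') j'.1 j'.2] at h1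
      · have h1 := (h j'.1 (Finset.mem_erase.mpr ⟨j'.2, Finset.mem_univ _⟩)).2
        rwa [esp_symm_ne k (d, v') j'.1 j'.2] at h1
    · rintro ⟨rfl, rfl⟩ j hj
      have hjk : j ≠ k := (Finset.mem_erase.mp hj).1
      rw [esp_symm_ne k _ j hjk, esp_symm_ne k _ j hjk]
      exact ⟨rfl, rfl⟩
  refine Finset.sum_congr rfl fun c _ => ?_
  rw [Finset.sum_comm]
  refine Finset.sum_congr rfl fun d _ => ?_
  have hre : ∀ (u' v' : {j : Fin n // j ≠ k} → Fin 2),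
      (L (Matrix.single ((esp k).symm (c, u') k) ((esp k).symm (d, v') k) 1) (s k) (t k) *
          (if ∀ j ∈ Finset.univ.erase k,
              (esp k).symm (c, u') j = s j ∧ (esp k).symm (d, v') j = t j then (1:ℂ) else 0)) *
        A ((esp k).symm (c, u')) ((esp k).symm (d, v'))
      = (if (u' = fun j => s j.1) ∧ (v' = fun j => t j.1) then (1:ℂ) else 0) *
          (L (Matrix.single c d 1) (s k) (t k) *
            A ((esp k).symm (c, u')) ((esp k).symm (d, v'))) := by
    intro u' v'
    rw [esp_symm_k, esp_symm_k, if_congr (hind c u' d v') rfl rfl]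
    ring
  simp only [hre]
  rw [collapse2]

lemma qform_expand (L : Mat (Fin 2) →ₗ[ℂ] Mat (Fin 2)) (M : Mat (Fin 2)) :
    (Mᴴ * L M).trace = ∑ a : Fin 2, ∑ b : Fin 2, ∑ c : Fin 2, ∑ d : Fin 2,
      (starRingEnd ℂ) (M a b) * (L (Matrix.single c d 1) a b) * M c d := by
  have hL : L M = ∑ c : Fin 2, ∑ d : Fin 2, M c d • L (Matrix.single c d 1) := by
    conv_lhs => rw [Matrix.matrix_eq_sum_single M]
    rw [map_sum]
    refine Finset.sum_congr rfl fun c _ => ?_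
    rw [map_sum]
    refine Finset.sum_congr rfl fun d _ => ?_
    rw [show Matrix.single c d (M c d) = M c d • Matrix.single c d 1 by
      rw [Matrix.smul_single, smul_eq_mul, mul_one], map_smul]
  rw [trace_conjT_mul, hL]
  refine Finset.sum_congr rfl fun a _ => Finset.sum_congr rfl fun b _ => ?_
  rw [Matrix.sum_apply]
  simp only [Matrix.sum_apply, Matrix.smul_apply, smul_eq_mul, Finset.mul_sum]
  refine Finset.sum_congr rfl fun c _ => Finset.sum_congr rfl fun d _ => by ring

/-- The `2 × 2` block of `A` at fixed off-site indices. -/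
noncomputable def Msub (k : Fin n) (A : Mat (Fin n → Fin 2))
    (s' t' : {j : Fin n // j ≠ k} → Fin 2) : Mat (Fin 2) :=
  Matrix.of fun a b => A ((esp k).symm (a, s')) ((esp k).symm (b, t'))

lemma esp_proj (k : Fin n) (p : Fin 2 × ({j : Fin n // j ≠ k} → Fin 2)) :
    (fun (j : {j : Fin n // j ≠ k}) => (esp k).symm p j.1) = p.2 :=
  funext fun j => esp_symm_ne k p j.1 j.2

lemma trace_qform_tensor (k : Fin n) (L : Mat (Fin 2) →ₗ[ℂ] Mat (Fin 2))
    (A : Mat (Fin n → Fin 2)) :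
    (Aᴴ * tensorPow (fun j => if j = k then L else LinearMap.id) A).trace
      = ∑ s' : {j : Fin n // j ≠ k} → Fin 2, ∑ t' : {j : Fin n // j ≠ k} → Fin 2,
          ((Msub k A s' t')ᴴ * L (Msub k A s' t')).trace := by
  rw [trace_conjT_mul]
  simp only [tensorPow_single_entry]
  simp only [← Equiv.sum_comp (esp k).symm]
  simp only [Fintype.sum_prod_type]
  simp only [esp_symm_k, esp_proj]
  rw [Finset.sum_comm]
  refine Finset.sum_congr rfl fun s' _ => ?_
  have hsw : ∀ (f : Fin 2 → Fin 2 → ({j : Fin n // j ≠ k} → Fin 2) → ℂ),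
      (∑ a : Fin 2, ∑ b : Fin 2, ∑ t' : {j : Fin n // j ≠ k} → Fin 2, f a b t')
        = ∑ t' : {j : Fin n // j ≠ k} → Fin 2, ∑ a : Fin 2, ∑ b : Fin 2, f a b t' := by
    intro f
    have h1 : ∀ a : Fin 2, (∑ b : Fin 2, ∑ t' : {j : Fin n // j ≠ k} → Fin 2, f a b t')
        = ∑ t' : {j : Fin n // j ≠ k} → Fin 2, ∑ b : Fin 2, f a b t' :=
      fun a => Finset.sum_comm
    simp only [h1]
    exact Finset.sum_comm
  rw [hsw]
  refine Finset.sum_congr rfl fun t' _ => ?_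
  rw [qform_expand]
  refine Finset.sum_congr rfl fun a _ => Finset.sum_congr rfl fun b _ => ?_
  simp only [Finset.mul_sum, Msub, Matrix.of_apply]
  exact Finset.sum_congr rfl fun c _ => Finset.sum_congr rfl fun d _ => by ring

end Helpers

/-- Comparison with the uniform generator: if `H ∈ G` has `‖H‖_min ≥ 1`, then for the
`k`-th embeddings `H⁽ᵏ⁾` and `H_u⁽ᵏ⁾` into `M_{2ⁿ}` and every Hermitian `A`,
`Tr(A H⁽ᵏ⁾(A)) ≥ Tr(A H_u⁽ᵏ⁾(A))`. -/
theorem trace_energy_ge_uniform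
    (H : Mat (Fin 2) →ₗ[ℂ] Mat (Fin 2)) (hG : memG H) (hmin : 1 ≤ normMin H)
    (n : ℕ) (hn : 1 ≤ n) (k : Fin n)
    (A : Mat (Fin n → Fin 2)) (hA : A.IsHermitian) :
    (A * (tensorPow fun j => if j = k then uniformGen else LinearMap.id) A).trace.re ≤
      (A * (tensorPow fun j => if j = k then H else LinearMap.id) A).trace.re := by
  have hA' : Aᴴ = A := hA
  rw [show A * (tensorPow fun j => if j = k then uniformGen else LinearMap.id) A
      = Aᴴ * (tensorPow fun j => if j = k then uniformGen else LinearMap.id) A by rw [hA'],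
    show A * (tensorPow fun j => if j = k then H else LinearMap.id) A
      = Aᴴ * (tensorPow fun j => if j = k then H else LinearMap.id) A by rw [hA']]
  rw [trace_qform_tensor, trace_qform_tensor, Complex.re_sum, Complex.re_sum]
  refine Finset.sum_le_sum fun s' _ => ?_
  rw [Complex.re_sum, Complex.re_sum]
  refine Finset.sum_le_sum fun t' _ => ?_
  exact core_ineq H hG hmin (Msub k A s' t')


end QHC
end
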